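/- arXiv:1710.07070 — 6 statements merged into one kernel-verified Lean document; each statement's English description precedes it below -/
import Mathlib

section
/- Let E be a Polish space and let d be a totally bounded metric on E inducing its topology. Then the unit ball 𝔅𝔏₁(E), defined with respect to d, is separable with respect to the supremum norm ‖·‖_∞. -/
open scoped NNReal

/-- The unit ball `𝔅𝔏₁(E)` of the space of bounded Lipschitz functions on a metric space `E`,
viewed inside the space of bounded continuous functions: those `f` with
`‖f‖_∞ + ‖f‖_L ≤ 1`, i.e. admitting a Lipschitz constant `K` with `‖f‖_∞ + K ≤ 1`. -/
def BLball (E : Type*) [PseudoMetricSpace E] : Set (BoundedContinuousFunction E ℝ) :=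
  {f | ∃ K : ℝ≥0, LipschitzWith K f ∧ ‖f‖ + (K : ℝ) ≤ 1}

/-- If `E` is a Polish space and `d` is a totally bounded metric on `E` inducing its topology,
then the unit ball `𝔅𝔏₁(E)` (defined via `d`) is separable for the supremum norm. -/
theorem blBall_separable_of_totallyBounded (E : Type*) [MetricSpace E] [PolishSpace E]
    (hd : TotallyBounded (Set.univ : Set E)) :
    TopologicalSpace.IsSeparable (BLball E) := by
  have htb : TotallyBounded (BLball E) := by
    rw [Metric.totallyBounded_iff]
    intro ε hε
    -- finite (ε/4)-net of E
    obtain ⟨s₀, hs₀fin, hs₀⟩ := Metric.totallyBounded_iff.mp hd (ε / 4) (by linarith)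
    haveI : Fintype ↥s₀ := hs₀fin.fintype
    -- restriction map to the net
    set Φ : BoundedContinuousFunction E ℝ → (↥s₀ → ℝ) := fun f x => f (x : E) with hΦ
    have himg : Φ '' BLball E ⊆ Metric.closedBall (0 : ↥s₀ → ℝ) 1 := by
      rintro _ ⟨f, hf, rfl⟩
      rw [Metric.mem_closedBall, dist_pi_le_iff zero_le_one]
      intro i
      obtain ⟨K, hK, hsum⟩ := hf
      have h1 : ‖f‖ ≤ 1 := le_trans (le_add_of_nonneg_right K.coe_nonneg) hsum
      simpa [Φ, Real.dist_eq] using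
        le_trans (f.norm_coe_le_norm (i : E)) h1
    have htbimg : TotallyBounded (Φ '' BLball E) :=
      ((isCompact_closedBall (0 : ↥s₀ → ℝ) 1).totallyBounded).subset himg
    obtain ⟨t, hts, htfin, hcov⟩ :=
      Metric.finite_approx_of_totallyBounded htbimg (ε / 4) (by linarith)
    have hch : ∀ y : ↥t, ∃ f ∈ BLball E, Φ f = (y : ↥s₀ → ℝ) := fun y => hts y.2
    choose F hF hΦF using hch
    haveI : Finite ↥t := htfin
    refine ⟨Set.range F, Set.finite_range F, ?_⟩
    intro g hg
    ·
      have hΦg : Φ g ∈ ⋃ y ∈ t, Metric.ball y (ε / 4) := hcov ⟨g, hg, rfl⟩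
      simp only [Set.mem_iUnion, Metric.mem_ball] at hΦg
      obtain ⟨y, hy, hdy⟩ := hΦg
      refine Set.mem_iUnion₂.mpr ⟨F ⟨y, hy⟩, ⟨⟨y, hy⟩, rfl⟩, ?_⟩
      rw [Metric.mem_ball]
      set f := F ⟨y, hy⟩ with hfdef
      obtain ⟨Kg, hKg, hsumg⟩ := hg
      obtain ⟨Kf, hKf, hsumf⟩ := hF ⟨y, hy⟩
      have hKg1 : (Kg : ℝ) ≤ 1 := le_trans (le_add_of_nonneg_left (norm_nonneg g)) hsumg
      have hKf1 : (Kf : ℝ) ≤ 1 := le_trans (le_add_of_nonneg_left (norm_nonneg f)) hsumf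
      have hle : dist g f ≤ 3 * (ε / 4) := by
        refine BoundedContinuousFunction.dist_le (by linarith) |>.mpr ?_
        intro x
        have hx : x ∈ ⋃ z ∈ s₀, Metric.ball z (ε / 4) := hs₀ (Set.mem_univ x)
        simp only [Set.mem_iUnion, Metric.mem_ball] at hx
        obtain ⟨z, hz, hdz⟩ := hx
        have h1 : dist (g x) (g z) ≤ ε / 4 := by
          calc dist (g x) (g z) ≤ Kg * dist x z := hKg.dist_le_mul x z
            _ ≤ 1 * dist x z := by
                apply mul_le_mul_of_nonneg_right hKg1 dist_nonneg
            _ ≤ ε / 4 := by rw [one_mul]; exact hdz.le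
        have h3 : dist (f z) (f x) ≤ ε / 4 := by
          calc dist (f z) (f x) ≤ Kf * dist z x := hKf.dist_le_mul z x
            _ ≤ 1 * dist z x := by
                apply mul_le_mul_of_nonneg_right hKf1 dist_nonneg
            _ ≤ ε / 4 := by rw [one_mul, dist_comm]; exact hdz.le
        have h2 : dist (g z) (f z) ≤ ε / 4 := by
          have hΦf : Φ f = (y : ↥s₀ → ℝ) := hΦF ⟨y, hy⟩
          calc dist (g z) (f z) = dist (Φ g ⟨z, hz⟩) (Φ f ⟨z, hz⟩) := rfl
            _ ≤ dist (Φ g) (Φ f) := dist_le_pi_dist _ _ _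
            _ = dist (Φ g) y := by rw [hΦf]
            _ ≤ ε / 4 := hdy.le
        calc dist (g x) (f x) ≤ dist (g x) (g z) + dist (g z) (f z) + dist (f z) (f x) :=
              dist_triangle4 _ _ _ _
          _ ≤ 3 * (ε / 4) := by linarith
      linarith
  exact htb.isSeparable
end

section
/- A sequence μ₁, μ₂, … in 𝔐₁^ψ(E) converges to μ₀ ∈ 𝔐₁^ψ(E) in the ψ-weak topology if and only if μ_n → μ₀ in the weak topology and ∫ψ dμ_n → ∫ψ dμ₀, as n → ∞. -/
open MeasureTheory Filter Topology
open scoped ENNReal NNReal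

/-- The one-sided Prohorov distance
`π(μ,ν) = inf {ε > 0 : μ(B) ≤ ν(Bᵉ) + ε for every Borel set B}`. -/
noncomputable def prohorovDist {E : Type*} [PseudoMetricSpace E] [MeasurableSpace E]
    (μ ν : MeasureTheory.Measure E) : ℝ :=
  sInf {ε : ℝ | 0 < ε ∧ ∀ B : Set E, MeasurableSet B →
    μ B ≤ ν (Metric.thickening ε B) + ENNReal.ofReal ε}

/-- The distance `d_ψ(μ,ν) = π(μ,ν) + |∫ψ dμ − ∫ψ dν|`. -/
noncomputable def dPsi {E : Type*} [PseudoMetricSpace E] [MeasurableSpace E] (ψ : E → ℝ)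
    (μ ν : MeasureTheory.Measure E) : ℝ :=
  prohorovDist μ ν + |(∫ x, ψ x ∂μ) - ∫ x, ψ x ∂ν|

/-- The space `𝔐₁^ψ(E)` of Borel probability measures integrating the gauge `ψ`. -/
abbrev MPsi (E : Type*) [MeasurableSpace E] (ψ : E → ℝ) : Type _ :=
  {μ : MeasureTheory.ProbabilityMeasure E // MeasureTheory.Integrable ψ (μ : MeasureTheory.Measure E)}

/-- The `ψ`-weak topology on `𝔐₁^ψ(E)`: the coarsest topology making `μ ↦ ∫ f dμ`
continuous for every continuous `f : E → ℝ` with `|f| ≤ C·ψ` for some constant `C`. -/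
noncomputable def psiWeakTopology (E : Type*) [MeasurableSpace E] [TopologicalSpace E]
    (ψ : E → ℝ) : TopologicalSpace (MPsi E ψ) :=
  ⨅ f : {f : E → ℝ // Continuous f ∧ ∃ C : ℝ, ∀ x, |f x| ≤ C * ψ x},
    TopologicalSpace.induced (fun μ => ∫ x, f.1 x ∂(μ.1 : MeasureTheory.Measure E)) inferInstance

/-- A sequence `μ₁, μ₂, …` in `𝔐₁^ψ(E)` converges to `μ₀ ∈ 𝔐₁^ψ(E)` in the `ψ`-weak topology
if and only if it converges in the weak topology (of `𝔐₁(E)`) and `∫ψ dμₙ → ∫ψ dμ₀`. -/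
theorem tendsto_psiWeak_iff (E : Type*) [TopologicalSpace E] [PolishSpace E]
    [MeasurableSpace E] [BorelSpace E]
    (ψ : E → ℝ) (hψc : Continuous ψ) (hψ1 : ∀ x, 1 ≤ ψ x)
    (μs : ℕ → MPsi E ψ) (μ0 : MPsi E ψ) :
    Filter.Tendsto μs Filter.atTop (@nhds _ (psiWeakTopology E ψ) μ0) ↔
      (Filter.Tendsto (fun n => (μs n).1) Filter.atTop (nhds μ0.1) ∧
        Filter.Tendsto (fun n => ∫ x, ψ x ∂((μs n).1 : Measure E)) Filter.atTop
          (nhds (∫ x, ψ x ∂(μ0.1 : Measure E)))) := by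
  have key : Filter.Tendsto μs Filter.atTop (@nhds _ (psiWeakTopology E ψ) μ0) ↔
      ∀ f : {f : E → ℝ // Continuous f ∧ ∃ C : ℝ, ∀ x, |f x| ≤ C * ψ x},
        Tendsto (fun n => ∫ x, f.1 x ∂((μs n).1 : Measure E)) atTop
          (nhds (∫ x, f.1 x ∂(μ0.1 : Measure E))) := by
    unfold psiWeakTopology
    rw [_root_.nhds_iInf, tendsto_iInf]
    refine forall_congr' fun f => ?_
    rw [nhds_induced, tendsto_comap_iff]
    exact Iff.rfl
  rw [key]
  constructor
  · intro h
    refine ⟨?_, ?_⟩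
    · rw [ProbabilityMeasure.tendsto_iff_forall_integral_tendsto]
      intro g
      exact h ⟨g, g.continuous, ⟨‖g‖, fun x =>
        le_trans (g.norm_coe_le_norm x) (le_mul_of_one_le_right (norm_nonneg g) (hψ1 x))⟩⟩
    · exact h ⟨ψ, hψc, 1, fun x => by
        rw [one_mul, abs_of_nonneg (le_trans zero_le_one (hψ1 x))]⟩
  · rintro ⟨hw, hψt⟩ ⟨f, hfc, C0, hC0⟩
    set C : ℝ := |C0| with hCdef
    have hCnn : 0 ≤ C := abs_nonneg _
    have hC : ∀ x, |f x| ≤ C * ψ x := fun x =>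
      le_trans (hC0 x) (mul_le_mul_of_nonneg_right (le_abs_self _)
        (le_trans zero_le_one (hψ1 x)))
    have hw' := ProbabilityMeasure.tendsto_iff_forall_integral_tendsto.mp hw
    -- integrability facts
    have hfint : ∀ μ : MPsi E ψ, Integrable f (μ.1 : Measure E) := fun μ =>
      (μ.2.const_mul C).mono' hfc.aestronglyMeasurable
        (ae_of_all _ fun x => by simpa [Real.norm_eq_abs] using hC x)
    have hgint : ∀ (m : ℕ) (μ : MPsi E ψ),
        Integrable (fun x => min (ψ x) (m : ℝ)) (μ.1 : Measure E) := fun m μ =>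
      μ.2.mono' (hψc.min continuous_const).aestronglyMeasurable
        (ae_of_all _ fun x => by
          rw [Real.norm_eq_abs,
            abs_of_nonneg (le_min (le_trans zero_le_one (hψ1 x)) (Nat.cast_nonneg m))]
          exact min_le_left _ _)
    -- bounded continuous truncations of ψ
    have hmin : ∀ m : ℕ, Tendsto (fun n => ∫ x, min (ψ x) (m : ℝ) ∂((μs n).1 : Measure E))
        atTop (𝓝 (∫ x, min (ψ x) (m : ℝ) ∂(μ0.1 : Measure E))) := by
      intro m
      exact hw' ⟨⟨fun x => min (ψ x) (m : ℝ), hψc.min continuous_const⟩,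
        ⟨(m : ℝ), fun x y => by
          have h1 : (0:ℝ) ≤ min (ψ x) m := le_min (le_trans zero_le_one (hψ1 x)) (Nat.cast_nonneg m)
          have h2 : (0:ℝ) ≤ min (ψ y) m := le_min (le_trans zero_le_one (hψ1 y)) (Nat.cast_nonneg m)
          have h3 : min (ψ x) (m:ℝ) ≤ m := min_le_right _ _
          have h4 : min (ψ y) (m:ℝ) ≤ m := min_le_right _ _
          rw [Real.dist_eq, abs_sub_le_iff]
          constructor <;> linarith⟩⟩
    -- tail integrals
    have hItend : ∀ m : ℕ,
        Tendsto (fun n => ∫ x, (ψ x - min (ψ x) (m : ℝ)) ∂((μs n).1 : Measure E)) atTop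
          (𝓝 (∫ x, (ψ x - min (ψ x) (m : ℝ)) ∂(μ0.1 : Measure E))) := by
      intro m
      have h1 : ∀ μ : MPsi E ψ, ∫ x, (ψ x - min (ψ x) (m : ℝ)) ∂(μ.1 : Measure E) =
          (∫ x, ψ x ∂(μ.1 : Measure E)) - ∫ x, min (ψ x) (m : ℝ) ∂(μ.1 : Measure E) :=
        fun μ => integral_sub μ.2 (hgint m μ)
      simp only [h1]
      exact hψt.sub (hmin m)
    have hI0tend : Tendsto (fun m : ℕ => ∫ x, (ψ x - min (ψ x) (m : ℝ)) ∂(μ0.1 : Measure E))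
        atTop (𝓝 0) := by
      have := tendsto_integral_of_dominated_convergence (μ := (μ0.1 : Measure E))
        (F := fun m x => ψ x - min (ψ x) (m : ℝ)) (f := fun _ => (0 : ℝ)) ψ
        (fun m => (hψc.sub (hψc.min continuous_const)).aestronglyMeasurable)
        μ0.2
        (fun m => ae_of_all _ fun x => by
          have h1 : (0:ℝ) ≤ min (ψ x) m := le_min (le_trans zero_le_one (hψ1 x)) (Nat.cast_nonneg m)
          have h2 : min (ψ x) (m:ℝ) ≤ ψ x := min_le_left _ _
          rw [Real.norm_eq_abs, abs_of_nonneg (sub_nonneg.mpr h2)]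
          linarith)
        (ae_of_all _ fun x => by
          refine Tendsto.congr' ?_ tendsto_const_nhds
          filter_upwards [eventually_ge_atTop ⌈ψ x⌉₊] with m hm
          rw [min_eq_left (le_trans (Nat.le_ceil _) (Nat.cast_le.mpr hm)), sub_self])
      simpa using this
    -- main ε-argument
    rw [Metric.tendsto_atTop]
    intro ε hε
    set δ : ℝ := ε / (16 * (C + 1)) with hδdef
    have hδpos : 0 < δ := by positivity
    obtain ⟨m, hm⟩ := (hI0tend.eventually_lt_const hδpos).exists
    set k : ℝ := 2 * C * m with hkdef
    have hk0 : 0 ≤ k := by positivity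
    -- pointwise truncation estimate
    have key2 : ∀ x, |f x - max (-k) (min (f x) k)| ≤ 2 * C * (ψ x - min (ψ x) (m : ℝ)) := by
      intro x
      have hψx := hψ1 x
      have hfx := hC x
      have hmin0 : (0:ℝ) ≤ min (ψ x) m := le_min (by linarith) (Nat.cast_nonneg m)
      have hminle : min (ψ x) (m:ℝ) ≤ ψ x := min_le_left _ _
      rcases le_or_gt (|f x|) k with h | h
      · rw [min_eq_left (abs_le.mp h).2, max_eq_right (abs_le.mp h).1, sub_self, abs_zero]
        nlinarith
      · have hCpos : 0 < C := by
          rcases hCnn.lt_or_eq with h' | h'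
          · exact h'
          · exfalso
            have := hfx
            rw [← h', zero_mul] at this
            have h0 : k = 0 := by rw [hkdef, ← h']; ring
            rw [h0] at h
            linarith [abs_nonneg (f x)]
        have hψ2m : 2 * (m:ℝ) < ψ x := by
          have h1 : 2 * C * (m:ℝ) < C * ψ x := lt_of_lt_of_le h hfx
          nlinarith
        have htr : |f x - max (-k) (min (f x) k)| ≤ |f x| := by
          rcases le_total (f x) k with h1 | h1
          · rw [min_eq_left h1]
            rcases le_total (-k) (f x) with h2 | h2
            · rw [max_eq_right h2, sub_self, abs_zero]; exact abs_nonneg _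
            · rw [max_eq_left h2, abs_of_nonpos (by linarith), abs_of_nonpos (by linarith)]
              linarith
          · rw [min_eq_right h1, max_eq_right (by linarith), abs_of_nonneg (by linarith),
              abs_of_nonneg (by linarith)]
            linarith
        have hmeq : min (ψ x) (m:ℝ) = (m:ℝ) := min_eq_right (by linarith)
        rw [hmeq]
        nlinarith
    -- truncation of f as a bounded continuous function
    set fk : BoundedContinuousFunction E ℝ :=
      ⟨⟨fun x => max (-k) (min (f x) k), (continuous_const.max ((hfc.min continuous_const)))⟩,
        ⟨2 * k, fun x y => by
          have hbx : -k ≤ max (-k) (min (f x) k) ∧ max (-k) (min (f x) k) ≤ k :=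
            ⟨le_max_left _ _, max_le (by linarith) (min_le_right _ _)⟩
          have hby : -k ≤ max (-k) (min (f y) k) ∧ max (-k) (min (f y) k) ≤ k :=
            ⟨le_max_left _ _, max_le (by linarith) (min_le_right _ _)⟩
          rw [Real.dist_eq, abs_sub_le_iff]
          constructor <;> linarith [hbx.1, hbx.2, hby.1, hby.2]⟩⟩ with hfkdef
    have hfk_tend : Tendsto (fun n => ∫ x, fk x ∂((μs n).1 : Measure E)) atTop
        (𝓝 (∫ x, fk x ∂(μ0.1 : Measure E))) := hw' fk
    -- integral estimates
    have hbint : ∀ μ : MPsi E ψ,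
        Integrable (fun x => 2 * C * (ψ x - min (ψ x) (m : ℝ))) (μ.1 : Measure E) :=
      fun μ => (μ.2.sub (hgint m μ)).const_mul (2 * C)
    have hd : ∀ μ : MPsi E ψ,
        |(∫ x, f x ∂(μ.1 : Measure E)) - ∫ x, fk x ∂(μ.1 : Measure E)| ≤
          2 * C * ∫ x, (ψ x - min (ψ x) (m : ℝ)) ∂(μ.1 : Measure E) := by
      intro μ
      have hfkint : Integrable (fun x => fk x) (μ.1 : Measure E) := fk.integrable _
      rw [← integral_sub (hfint μ) hfkint]
      have := norm_integral_le_of_norm_le (μ := (μ.1 : Measure E))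
        (f := fun x => f x - fk x) (hbint μ)
        (ae_of_all _ fun x => by rw [Real.norm_eq_abs]; exact key2 x)
      rw [Real.norm_eq_abs] at this
      calc |∫ x, (f x - fk x) ∂(μ.1 : Measure E)|
          ≤ ∫ x, 2 * C * (ψ x - min (ψ x) (m : ℝ)) ∂(μ.1 : Measure E) := this
        _ = 2 * C * ∫ x, (ψ x - min (ψ x) (m : ℝ)) ∂(μ.1 : Measure E) := integral_const_mul _ _
    -- eventual bounds
    have E1 : ∀ᶠ n in atTop,
        (∫ x, (ψ x - min (ψ x) (m : ℝ)) ∂((μs n).1 : Measure E)) < 2 * δ :=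
      (hItend m).eventually_lt_const (by linarith)
    have E2 : ∀ᶠ n in atTop,
        dist (∫ x, fk x ∂((μs n).1 : Measure E)) (∫ x, fk x ∂(μ0.1 : Measure E)) < δ := by
      have := hfk_tend (Metric.ball_mem_nhds _ hδpos)
      simpa [Metric.mem_ball] using this
    rw [eventually_atTop] at E1 E2
    obtain ⟨N1, hN1⟩ := E1
    obtain ⟨N2, hN2⟩ := E2
    refine ⟨max N1 N2, fun n hn => ?_⟩
    have h1 := hN1 n (le_trans (le_max_left _ _) hn)
    have h2 := hN2 n (le_trans (le_max_right _ _) hn)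
    have hdn := hd (μs n)
    have hd0 := hd μ0
    have hInn : (0:ℝ) ≤ ∫ x, (ψ x - min (ψ x) (m : ℝ)) ∂(((μs n).1 : Measure E)) :=
      integral_nonneg fun x => sub_nonneg.mpr (min_le_left _ _)
    have hI0n : (0:ℝ) ≤ ∫ x, (ψ x - min (ψ x) (m : ℝ)) ∂((μ0.1 : Measure E)) :=
      integral_nonneg fun x => sub_nonneg.mpr (min_le_left _ _)
    rw [Real.dist_eq]
    rw [Real.dist_eq] at h2
    have tri : |(∫ x, f x ∂((μs n).1 : Measure E)) - ∫ x, f x ∂(μ0.1 : Measure E)| ≤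
        |(∫ x, f x ∂((μs n).1 : Measure E)) - ∫ x, fk x ∂((μs n).1 : Measure E)| +
        |(∫ x, fk x ∂((μs n).1 : Measure E)) - ∫ x, fk x ∂(μ0.1 : Measure E)| +
        |(∫ x, fk x ∂(μ0.1 : Measure E)) - ∫ x, f x ∂(μ0.1 : Measure E)| := by
      have := abs_sub_le (∫ x, f x ∂((μs n).1 : Measure E))
        (∫ x, fk x ∂((μs n).1 : Measure E)) (∫ x, f x ∂(μ0.1 : Measure E))
      have h' := abs_sub_le (∫ x, fk x ∂((μs n).1 : Measure E))
        (∫ x, fk x ∂(μ0.1 : Measure E)) (∫ x, f x ∂(μ0.1 : Measure E))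
      linarith
    have hd0' : |(∫ x, fk x ∂(μ0.1 : Measure E)) - ∫ x, f x ∂(μ0.1 : Measure E)| ≤
        2 * C * ∫ x, (ψ x - min (ψ x) (m : ℝ)) ∂(μ0.1 : Measure E) := by
      rw [abs_sub_comm]; exact hd0
    have hε' : ε = 16 * (C + 1) * δ := by
      rw [hδdef]; field_simp
    nlinarith [mul_le_mul_of_nonneg_left h1.le (by linarith : (0:ℝ) ≤ 2*C),
      mul_le_mul_of_nonneg_left hm.le (by linarith : (0:ℝ) ≤ 2*C)]
end

section
/- The Borel σ-algebra 𝔐^ψ on 𝔐₁^ψ(E) generated by the ψ-weak topology coincides with the Borel σ-algebra on 𝔐₁^ψ(E) generated by the relative topology inherited from the weak topology on 𝔐₁(E). -/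
open MeasureTheory Filter Topology
open scoped ENNReal NNReal

/-! ### Auxiliary material -/

section Clamp

variable {E : Type*} [TopologicalSpace E]

/-- Clamping a continuous function to `[-M, M]`, as a bounded continuous function. -/
noncomputable def clampBCF (f : E → ℝ) (hf : Continuous f) (M : ℝ) (hM : 0 ≤ M) :
    BoundedContinuousFunction E ℝ :=
  BoundedContinuousFunction.ofNormedAddCommGroup (fun x => max (-M) (min (f x) M))
    (continuous_const.max (hf.min continuous_const)) M
    (fun x => by
      rw [Real.norm_eq_abs, abs_le]
      exact ⟨le_max_left _ _, max_le (by linarith) (min_le_right _ _)⟩)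

lemma clampBCF_apply (f : E → ℝ) (hf : Continuous f) (M : ℝ) (hM : 0 ≤ M) (x : E) :
    clampBCF f hf M hM x = max (-M) (min (f x) M) := rfl

lemma clamp_psi_eq {ψ : E → ℝ} (hψc : Continuous ψ) (hψ1 : ∀ x, 1 ≤ ψ x)
    {K : ℝ} (hK : 1 ≤ K) (hK0 : 0 ≤ K) (x : E) :
    clampBCF ψ hψc K hK0 x = min (ψ x) K := by
  rw [clampBCF_apply]
  exact max_eq_right (le_min (by linarith [hψ1 x]) (by linarith))

lemma abs_sub_clamp_le {ψ f : E → ℝ} (hψc : Continuous ψ) (hψ1 : ∀ x, 1 ≤ ψ x)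
    (hf : Continuous f) {C K : ℝ} (hC : 1 ≤ C) (hK : 1 ≤ K) (hCK : 0 ≤ C * K) (hK0 : 0 ≤ K)
    (hfC : ∀ x, |f x| ≤ C * ψ x) (x : E) :
    |f x - clampBCF f hf (C * K) hCK x| ≤ C * (ψ x - clampBCF ψ hψc K hK0 x) := by
  have hx1 : 1 ≤ ψ x := hψ1 x
  rw [clamp_psi_eq hψc hψ1 hK hK0, clampBCF_apply]
  rcases le_total (f x) (C * K) with h | h
  · rcases le_total (-(C * K)) (f x) with h' | h'
    · rw [min_eq_left h, max_eq_right h', sub_self, abs_zero]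
      exact mul_nonneg (by linarith) (by simp [min_le_left])
    · -- f x ≤ -(C*K)
      have hfx : -(f x) ≤ C * ψ x := (neg_le_abs _).trans (hfC x)
      have hψK : K ≤ ψ x := le_of_mul_le_mul_left
        (show C * K ≤ C * ψ x by linarith) (show (0:ℝ) < C by linarith)
      rw [min_eq_left h, max_eq_left h', min_eq_right hψK]
      rw [abs_of_nonpos (by linarith), mul_sub]
      linarith
  · -- C*K ≤ f x
    have hfx : f x ≤ C * ψ x := (le_abs_self _).trans (hfC x)
    have hψK : K ≤ ψ x := le_of_mul_le_mul_left
      (show C * K ≤ C * ψ x by linarith) (show (0:ℝ) < C by linarith)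
    rw [min_eq_right h, max_eq_right (by linarith : -(C * K) ≤ C * K), min_eq_right hψK]
    rw [abs_of_nonneg (by linarith), mul_sub]
    linarith

end Clamp

section Integral

variable {E : Type*} [MeasurableSpace E] [TopologicalSpace E] [OpensMeasurableSpace E]

lemma abs_integral_sub_clamp {ψ f : E → ℝ} (hψc : Continuous ψ) (hψ1 : ∀ x, 1 ≤ ψ x)
    (hf : Continuous f) {C K : ℝ} (hC : 1 ≤ C) (hK : 1 ≤ K) (hCK : 0 ≤ C * K) (hK0 : 0 ≤ K)
    (hfC : ∀ x, |f x| ≤ C * ψ x)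
    (μ : MeasureTheory.Measure E) [IsFiniteMeasure μ] (hψint : Integrable ψ μ) :
    |∫ x, f x ∂μ - ∫ x, clampBCF f hf (C * K) hCK x ∂μ|
      ≤ C * (∫ x, ψ x ∂μ - ∫ x, clampBCF ψ hψc K hK0 x ∂μ) := by
  have hfm : Integrable f μ := by
    refine Integrable.mono (hψint.const_mul C) hf.measurable.aestronglyMeasurable
      (Filter.Eventually.of_forall fun x => ?_)
    rw [Real.norm_eq_abs, Real.norm_eq_abs,
      abs_of_nonneg (by nlinarith [hψ1 x] : (0:ℝ) ≤ C * ψ x)]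
    exact hfC x
  have hg : Integrable (fun x => clampBCF f hf (C * K) hCK x) μ :=
    (clampBCF f hf (C * K) hCK).integrable μ
  have hp : Integrable (fun x => clampBCF ψ hψc K hK0 x) μ :=
    (clampBCF ψ hψc K hK0).integrable μ
  rw [← integral_sub hfm hg]
  calc |∫ x, (f x - clampBCF f hf (C * K) hCK x) ∂μ|
      ≤ ∫ x, |f x - clampBCF f hf (C * K) hCK x| ∂μ := by
        simpa [Real.norm_eq_abs] using
          norm_integral_le_integral_norm (fun x => f x - clampBCF f hf (C * K) hCK x) (μ := μ)
    _ ≤ ∫ x, C * (ψ x - clampBCF ψ hψc K hK0 x) ∂μ := by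
        refine integral_mono (hfm.sub hg).abs ((hψint.sub hp).const_mul C) fun x => ?_
        exact abs_sub_clamp_le hψc hψ1 hf hC hK hCK hK0 hfC x
    _ = C * (∫ x, ψ x ∂μ - ∫ x, clampBCF ψ hψc K hK0 x ∂μ) := by
        rw [integral_const_mul, integral_sub hψint hp]

lemma tendsto_integral_clamp {ψ : E → ℝ} (hψc : Continuous ψ) (hψ1 : ∀ x, 1 ≤ ψ x)
    (μ : MeasureTheory.Measure E) [IsFiniteMeasure μ] (hψint : Integrable ψ μ) :
    Tendsto (fun n : ℕ => ∫ x, clampBCF ψ hψc ((n : ℝ) + 1) (by positivity) x ∂μ) atTop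
      (𝓝 (∫ x, ψ x ∂μ)) := by
  refine integral_tendsto_of_tendsto_of_monotone
    (fun n => (clampBCF ψ hψc ((n : ℝ) + 1) (by positivity)).integrable μ) hψint
    (Filter.Eventually.of_forall fun x => ?_) (Filter.Eventually.of_forall fun x => ?_)
  · intro m k hmk
    have h1 : (1:ℝ) ≤ (m : ℝ) + 1 := le_add_of_nonneg_left (Nat.cast_nonneg m)
    have h2 : (1:ℝ) ≤ (k : ℝ) + 1 := le_add_of_nonneg_left (Nat.cast_nonneg k)
    dsimp only
    rw [clamp_psi_eq hψc hψ1 h1 (by positivity), clamp_psi_eq hψc hψ1 h2 (by positivity)]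
    exact min_le_min le_rfl (by exact_mod_cast Nat.add_le_add_right hmk 1)
  · have hev : ∀ᶠ n : ℕ in atTop,
        clampBCF ψ hψc ((n : ℝ) + 1) (by positivity) x = ψ x := by
      filter_upwards [eventually_ge_atTop ⌈ψ x⌉₊] with n hn
      rw [clamp_psi_eq hψc hψ1 (le_add_of_nonneg_left (Nat.cast_nonneg n)) (by positivity)]
      refine min_eq_left ((Nat.le_ceil _).trans ?_)
      have : ((⌈ψ x⌉₊ : ℝ)) ≤ (n : ℝ) := by exact_mod_cast hn
      linarith
    exact Tendsto.congr' (hev.mono fun n h => h.symm) tendsto_const_nhds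

end Integral

section PsiWeak

variable {E : Type*} [MeasurableSpace E] [TopologicalSpace E]

/-- Every test function in the defining family gives a `ψ`-weakly continuous integral map. -/
lemma psiWeak_continuous_integral (ψ : E → ℝ)
    (f : {f : E → ℝ // Continuous f ∧ ∃ C : ℝ, ∀ x, |f x| ≤ C * ψ x}) :
    @Continuous _ _ (psiWeakTopology E ψ) _
      (fun μ : MPsi E ψ => ∫ x, f.1 x ∂(μ.1 : MeasureTheory.Measure E)) :=
  continuous_iff_le_induced.mpr (iInf_le _ f)

lemma tendsto_integral_psiWeak [BorelSpace E]
    {ψ : E → ℝ} (hψc : Continuous ψ) (hψ1 : ∀ x, 1 ≤ ψ x)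
    {ι : Type*} {l : Filter ι} {μs : ι → MPsi E ψ} {μ : MPsi E ψ}
    (h1 : Tendsto (fun i => (μs i).1) l (𝓝 μ.1))
    (h2 : Tendsto (fun i => ∫ x, ψ x ∂((μs i).1 : MeasureTheory.Measure E)) l
      (𝓝 (∫ x, ψ x ∂(μ.1 : MeasureTheory.Measure E))))
    {f : E → ℝ} (hf : Continuous f) {C : ℝ} (hC : 1 ≤ C) (hfC : ∀ x, |f x| ≤ C * ψ x) :
    Tendsto (fun i => ∫ x, f x ∂((μs i).1 : MeasureTheory.Measure E)) l
      (𝓝 (∫ x, f x ∂(μ.1 : MeasureTheory.Measure E))) := by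
  have hC0 : (0:ℝ) < C := by linarith
  have hint : ∀ g : BoundedContinuousFunction E ℝ,
      Tendsto (fun i => ∫ x, g x ∂((μs i).1 : MeasureTheory.Measure E)) l
        (𝓝 (∫ x, g x ∂(μ.1 : MeasureTheory.Measure E))) :=
    fun g => ProbabilityMeasure.tendsto_iff_forall_integral_tendsto.mp h1 g
  rw [Metric.tendsto_nhds]
  intro ε hε
  have hε8 : 0 < ε / (8 * C) := by positivity
  obtain ⟨n, hn⟩ :=
    (Metric.tendsto_nhds.mp (tendsto_integral_clamp hψc hψ1 (μ.1 : MeasureTheory.Measure E) μ.2)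
      (ε / (8 * C)) hε8).exists
  have hK : (1:ℝ) ≤ (n : ℝ) + 1 := le_add_of_nonneg_left (Nat.cast_nonneg n)
  have hK0 : (0:ℝ) ≤ (n : ℝ) + 1 := by positivity
  have hCK : (0:ℝ) ≤ C * ((n : ℝ) + 1) := by positivity
  set K : ℝ := (n : ℝ) + 1 with hKdef
  set pK := clampBCF ψ hψc K hK0 with hpK
  set gK := clampBCF f hf (C * K) hCK with hgK
  have hba : ∫ x, ψ x ∂(μ.1 : MeasureTheory.Measure E)
      - ∫ x, pK x ∂(μ.1 : MeasureTheory.Measure E) < ε / (8 * C) := by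
    have h := hn
    rw [Real.dist_eq] at h
    have h' : |(∫ x, pK x ∂(μ.1 : MeasureTheory.Measure E))
        - ∫ x, ψ x ∂(μ.1 : MeasureTheory.Measure E)| < ε / (8 * C) := h
    linarith [(abs_lt.mp h').1]
  have E1 := Metric.tendsto_nhds.mp h2 _ hε8
  have E2 := Metric.tendsto_nhds.mp (hint pK) _ hε8
  have E3 := Metric.tendsto_nhds.mp (hint gK) (ε / 4) (by positivity)
  filter_upwards [E1, E2, E3] with i hi1 hi2 hi3
  rw [Real.dist_eq] at hi1 hi2 hi3 ⊢
  have est_ν := abs_integral_sub_clamp hψc hψ1 hf hC hK hCK hK0 hfC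
    ((μs i).1 : MeasureTheory.Measure E) (μs i).2
  have est_μ := abs_integral_sub_clamp hψc hψ1 hf hC hK hCK hK0 hfC
    (μ.1 : MeasureTheory.Measure E) μ.2
  rw [← hpK, ← hgK] at est_ν est_μ
  have hAa := abs_lt.mp hi1
  have hBb := abs_lt.mp hi2
  have hδ : C * (ε / (8 * C)) = ε / 8 := by field_simp
  have hAB : (∫ x, ψ x ∂((μs i).1 : MeasureTheory.Measure E))
      - (∫ x, pK x ∂((μs i).1 : MeasureTheory.Measure E))
      ≤ ((∫ x, ψ x ∂(μ.1 : MeasureTheory.Measure E))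
        - (∫ x, pK x ∂(μ.1 : MeasureTheory.Measure E))) + ε / (8 * C) + ε / (8 * C) := by
    linarith [hAa.2, hBb.1]
  have m1 := mul_le_mul_of_nonneg_left hAB hC0.le
  have m2 := mul_le_mul_of_nonneg_left hba.le hC0.le
  rw [mul_add, mul_add] at m1
  have key := abs_sub_le (∫ x, f x ∂((μs i).1 : MeasureTheory.Measure E))
    (∫ x, gK x ∂((μs i).1 : MeasureTheory.Measure E))
    (∫ x, f x ∂(μ.1 : MeasureTheory.Measure E))
  have key2 := abs_sub_le (∫ x, gK x ∂((μs i).1 : MeasureTheory.Measure E))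
    (∫ x, gK x ∂(μ.1 : MeasureTheory.Measure E))
    (∫ x, f x ∂(μ.1 : MeasureTheory.Measure E))
  have est_μ' : |(∫ x, gK x ∂(μ.1 : MeasureTheory.Measure E))
      - ∫ x, f x ∂(μ.1 : MeasureTheory.Measure E)|
      ≤ C * ((∫ x, ψ x ∂(μ.1 : MeasureTheory.Measure E))
        - ∫ x, pK x ∂(μ.1 : MeasureTheory.Measure E)) := by
    rw [abs_sub_comm]; exact est_μ
  linarith
end PsiWeak

/-- The Borel σ-algebra on `𝔐₁^ψ(E)` generated by the `ψ`-weak topology coincides with the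
Borel σ-algebra generated by the relative topology inherited from the weak topology on
`𝔐₁(E)` (the subtype topology, which is the default instance on `MPsi E ψ`). -/
theorem borel_psiWeak_eq_borel_relative_weak (E : Type*) [TopologicalSpace E] [PolishSpace E]
    [MeasurableSpace E] [BorelSpace E]
    (ψ : E → ℝ) (hψc : Continuous ψ) (hψ1 : ∀ x, 1 ≤ ψ x) :
    @borel (MPsi E ψ) (psiWeakTopology E ψ) = borel (MPsi E ψ) := by
  have hψ0 : ∀ x, (0:ℝ) ≤ ψ x := fun x => zero_le_one.trans (hψ1 x)
  -- the gauge as an element of the defining family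
  let fψ : {f : E → ℝ // Continuous f ∧ ∃ C : ℝ, ∀ x, |f x| ≤ C * ψ x} :=
    ⟨ψ, hψc, 1, fun x => by rw [one_mul, abs_of_nonneg (hψ0 x)]⟩
  -- the embedding into the product
  set Φ : MPsi E ψ → MPsi E ψ × ℝ :=
    fun μ => (μ, ∫ x, ψ x ∂(μ.1 : MeasureTheory.Measure E)) with hΦdef
  -- `ψ`-weak topology is induced by `Φ`
  have hval : @Continuous _ _ (psiWeakTopology E ψ) _
      (fun μ : MPsi E ψ => (μ.1 : ProbabilityMeasure E)) := by
    rw [@continuous_iff_continuousAt _ _ (psiWeakTopology E ψ) _]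
    intro μ
    refine ProbabilityMeasure.tendsto_iff_forall_integral_tendsto.mpr fun g => ?_
    have hg : ∀ x, |g x| ≤ ‖g‖ * ψ x := fun x => by
      rw [← Real.norm_eq_abs]
      exact (g.norm_coe_le_norm x).trans (le_mul_of_one_le_right (norm_nonneg g) (hψ1 x))
    exact @Continuous.tendsto _ _ (psiWeakTopology E ψ) _ _
      (psiWeak_continuous_integral ψ ⟨g, g.continuous, ‖g‖, hg⟩) μ
  have hind : psiWeakTopology E ψ = TopologicalSpace.induced Φ inferInstance := by
    refine le_antisymm ?_ (le_iInf fun f => ?_)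
    · -- `Φ` is continuous for the ψ-weak topology
      have hprod : (inferInstance : TopologicalSpace (MPsi E ψ × ℝ))
          = TopologicalSpace.induced (Prod.fst : MPsi E ψ × ℝ → MPsi E ψ) inferInstance
            ⊓ TopologicalSpace.induced (Prod.snd : MPsi E ψ × ℝ → ℝ) inferInstance := rfl
      rw [hprod, induced_inf, induced_compose, induced_compose]
      have c1 : Prod.fst ∘ Φ = (id : MPsi E ψ → MPsi E ψ) := rfl
      have c2 : Prod.snd ∘ Φ
          = fun μ : MPsi E ψ => ∫ x, ψ x ∂(μ.1 : MeasureTheory.Measure E) := rfl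
      rw [c1, c2, induced_id]
      refine le_inf ?_ (continuous_iff_le_induced.mp (psiWeak_continuous_integral ψ fψ))
      exact continuous_iff_le_induced.mp hval
    · obtain ⟨C₀, hC₀⟩ := f.2.2
      have hfC : ∀ x, |f.1 x| ≤ max C₀ 1 * ψ x := fun x =>
        (hC₀ x).trans (mul_le_mul_of_nonneg_right (le_max_left _ _) (hψ0 x))
      refine continuous_iff_le_induced.mp ?_
      refine (@continuous_iff_continuousAt _ _
        (TopologicalSpace.induced Φ inferInstance) _ _).mpr fun μ => ?_
      show Filter.Tendsto _ (@nhds _ (TopologicalSpace.induced Φ inferInstance) μ) (𝓝 _)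
      rw [nhds_induced]
      have hΦt : Tendsto Φ (Filter.comap Φ (𝓝 (Φ μ))) (𝓝 (Φ μ)) := tendsto_comap
      have h1 : Tendsto (fun ν : MPsi E ψ => (ν.1 : ProbabilityMeasure E))
          (Filter.comap Φ (𝓝 (Φ μ))) (𝓝 μ.1) :=
        (continuous_subtype_val.tendsto _).comp ((continuous_fst.tendsto _).comp hΦt)
      have h2 : Tendsto (fun ν : MPsi E ψ => ∫ x, ψ x ∂(ν.1 : MeasureTheory.Measure E))
          (Filter.comap Φ (𝓝 (Φ μ))) (𝓝 (∫ x, ψ x ∂(μ.1 : MeasureTheory.Measure E))) :=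
        (continuous_snd.tendsto _).comp hΦt
      exact tendsto_integral_psiWeak hψc hψ1 h1 h2 f.2.1 (le_max_right C₀ 1) hfC
  -- now compute Borel σ-algebras
  letI m1 : MeasurableSpace (MPsi E ψ) := borel (MPsi E ψ)
  haveI hb1 : BorelSpace (MPsi E ψ) := ⟨rfl⟩
  haveI hb2 : BorelSpace (MPsi E ψ × ℝ) := Prod.borelSpace
  have hcomap : @borel (MPsi E ψ) (psiWeakTopology E ψ)
      = (borel (MPsi E ψ × ℝ)).comap Φ := by
    rw [hind]; exact borel_comap
  rw [hcomap]
  -- measurability of `μ ↦ ∫ ψ dμ` w.r.t. the Borel σ-algebra of the subtype topology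
  have hψmeas : Measurable (fun μ : MPsi E ψ => ∫ x, ψ x ∂(μ.1 : MeasureTheory.Measure E)) := by
    refine measurable_of_tendsto_metrizable' (f := fun (n : ℕ) (μ : MPsi E ψ) =>
      ∫ x, clampBCF ψ hψc ((n : ℝ) + 1) (by positivity) x ∂(μ.1 : MeasureTheory.Measure E))
      atTop (fun n => ?_) ?_
    · exact ((ProbabilityMeasure.continuous_integral_boundedContinuousFunction
        (clampBCF ψ hψc ((n : ℝ) + 1) (by positivity))).comp continuous_subtype_val).measurable
    · rw [tendsto_pi_nhds]
      intro μ
      exact tendsto_integral_clamp hψc hψ1 (μ.1 : MeasureTheory.Measure E) μ.2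
  have hΦmeas : Measurable Φ := Measurable.prodMk measurable_id hψmeas
  refine le_antisymm ?_ ?_
  · rw [← hb2.measurable_eq]
    exact measurable_iff_comap_le.mp hΦmeas
  · have hid : m1 = (m1.comap Prod.fst).comap Φ := by
      rw [MeasurableSpace.comap_comp]
      have : (Prod.fst ∘ Φ) = (id : MPsi E ψ → MPsi E ψ) := rfl
      rw [this, MeasurableSpace.comap_id]
    calc m1 = (m1.comap Prod.fst).comap Φ := hid
      _ ≤ (borel (MPsi E ψ × ℝ)).comap Φ := by
          refine MeasurableSpace.comap_mono ?_
          rw [← hb2.measurable_eq]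
          exact measurable_iff_comap_le.mp measurable_fst
end

section
/- (Varadarajan) If the coordinate variables ξ₁, ξ₂, … are independent with common law μ ∈ 𝔐₁(E), then ℙ-almost surely the empirical measures m_n converge to μ in the weak topology, as n → ∞. -/
open MeasureTheory Filter Topology
open scoped ENNReal NNReal

/-- The empirical measure `m_{n+1}(ω) = (n+1)⁻¹ ∑_{i=0}^{n} δ_{ω i}` of the first `n+1`
observations (coordinates) of the sequence `ω : ℕ → E`. -/
noncomputable def empMeasure (E : Type*) [MeasurableSpace E] (n : ℕ) (ω : ℕ → E) :
    MeasureTheory.Measure E :=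
  ((n : ℝ≥0∞) + 1)⁻¹ • ∑ i ∈ Finset.range (n + 1), MeasureTheory.Measure.dirac (ω i)

/-- The empirical measure as a probability measure. -/
noncomputable def empirical (E : Type*) [MeasurableSpace E] (n : ℕ) (ω : ℕ → E) :
    MeasureTheory.ProbabilityMeasure E :=
  ⟨empMeasure E n ω, by
    constructor
    simp [empMeasure, Measure.smul_apply, Finset.sum_apply]
    rw [ENNReal.inv_mul_cancel] <;> simp⟩

lemma empirical_apply_toReal {E : Type*} [MeasurableSpace E] (n : ℕ) (ω : ℕ → E)
    {A : Set E} (hA : MeasurableSet A) :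
    ((empirical E n ω A : ℝ≥0) : ℝ)
      = (∑ i ∈ Finset.range (n + 1), A.indicator (fun _ => (1 : ℝ)) (ω i)) / ((n : ℝ) + 1) := by
  have h1 : ((empirical E n ω A : ℝ≥0) : ℝ) = ((empMeasure E n ω) A).toReal := by
    rw [← ENNReal.coe_toReal, ProbabilityMeasure.ennreal_coeFn_eq_coeFn_toMeasure]
    rfl
  rw [h1]
  have h2 : (empMeasure E n ω) A
      = ((n : ℝ≥0∞) + 1)⁻¹ * ∑ i ∈ Finset.range (n + 1),
          A.indicator (fun _ => (1 : ℝ≥0∞)) (ω i) := by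
    simp [empMeasure, Measure.smul_apply, Measure.finset_sum_apply, smul_eq_mul,
      Measure.dirac_apply' _ hA, Set.indicator]
  rw [h2, ENNReal.toReal_mul, ENNReal.toReal_sum]
  · rw [div_eq_inv_mul]
    congr 1
    · rw [show ((n : ℝ≥0∞) + 1) = ((n + 1 : ℕ) : ℝ≥0∞) by push_cast; ring,
        ENNReal.toReal_inv, ENNReal.toReal_natCast]
      push_cast; ring
    · refine Finset.sum_congr rfl fun i _ => ?_
      by_cases hx : ω i ∈ A <;> simp [Set.indicator, hx]
  · intro i _
    by_cases hx : ω i ∈ A <;> simp [Set.indicator, hx]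

lemma empirical_tendsto_of_measurableSet
    {E : Type*} [MeasurableSpace E]
    (ℙ : Measure (ℕ → E)) [IsProbabilityMeasure ℙ]
    (μ : ProbabilityMeasure E)
    (hindep : ProbabilityTheory.iIndepFun
      (fun i (ω : ℕ → E) => ω i) ℙ)
    (hlaw : ∀ i : ℕ, ℙ.map (fun ω => ω i) = (μ : Measure E))
    {A : Set E} (hA : MeasurableSet A) :
    ∀ᵐ ω ∂ℙ, Tendsto (fun n => (empirical E n ω A : ℝ≥0)) atTop (𝓝 (μ A)) := by
  classical
  set f : E → ℝ := (A.indicator 1 : E → ℝ) with hf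
  have hfm : Measurable f := measurable_const.indicator hA
  set X : ℕ → (ℕ → E) → ℝ := fun i ω => f (ω i) with hX
  have hXm : ∀ i, Measurable (X i) := fun i => hfm.comp (measurable_pi_apply i)
  have hfb : ∀ x, ‖f x‖ ≤ 1 := by
    intro x
    by_cases hx : x ∈ A <;> simp [hf, Set.indicator, hx]
  have hint : Integrable (X 0) ℙ := by
    refine Integrable.mono' (integrable_const 1) (hXm 0).aestronglyMeasurable ?_
    exact Eventually.of_forall fun ω => hfb (ω 0)
  have hpair : Pairwise (Function.onFun (ProbabilityTheory.IndepFun · · ℙ) X) := by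
    intro i j hij
    exact (hindep.indepFun hij).comp hfm hfm
  have hmap : ∀ i, ℙ.map (X i) = (μ : Measure E).map f := by
    intro i
    rw [← hlaw i, Measure.map_map hfm (measurable_pi_apply i)]
    rfl
  have hident : ∀ i, ProbabilityTheory.IdentDistrib (X i) (X 0) ℙ ℙ := fun i =>
    ⟨(hXm i).aemeasurable, (hXm 0).aemeasurable, by rw [hmap i, hmap 0]⟩
  have hexp : (∫ a, X 0 a ∂ℙ) = ((μ A : ℝ≥0) : ℝ) := by
    have : (∫ a, X 0 a ∂ℙ) = ∫ x, f x ∂(ℙ.map (fun ω => ω 0)) := by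
      rw [integral_map (measurable_pi_apply 0).aemeasurable hfm.aestronglyMeasurable]
    rw [this, hlaw 0, hf, integral_indicator_one hA, ← ENNReal.coe_toReal,
      ProbabilityMeasure.ennreal_coeFn_eq_coeFn_toMeasure]
    rfl
  have hslln := ProbabilityTheory.strong_law_ae_real X hint hpair hident
  filter_upwards [hslln] with ω hω
  rw [hexp] at hω
  have h2 := hω.comp (tendsto_add_atTop_nat 1)
  rw [← NNReal.tendsto_coe]
  convert h2 using 2 with n
  rw [empirical_apply_toReal n ω hA]
  simp [Function.comp, hX]
  ring_nf
  rw [mul_comm]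
  rfl

/-- **Varadarajan's theorem.** If the coordinate variables `ξ₁, ξ₂, …` on `Ω = E^ℕ` are
independent with common law `μ ∈ 𝔐₁(E)`, then `ℙ`-almost surely the empirical measures `m_n`
converge to `μ` in the weak topology, as `n → ∞`. -/
theorem varadarajan (E : Type*) [TopologicalSpace E] [PolishSpace E]
    [MeasurableSpace E] [BorelSpace E]
    (ℙ : Measure (ℕ → E)) [IsProbabilityMeasure ℙ]
    (μ : ProbabilityMeasure E)
    (hindep : ProbabilityTheory.iIndepFun
      (fun i (ω : ℕ → E) => ω i) ℙ)
    (hlaw : ∀ i : ℕ, ℙ.map (fun ω => ω i) = (μ : Measure E)) :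
    ∀ᵐ ω ∂ℙ, Filter.Tendsto (fun n => empirical E n ω) Filter.atTop (nhds μ) := by
  classical
  obtain ⟨b, hbc, -, hbasis⟩ := TopologicalSpace.exists_countable_basis E
  obtain ⟨B, hB⟩ := (hbc.insert ∅).exists_eq_range (Set.insert_nonempty _ _)
  have hBopen : ∀ i, IsOpen (B i) := by
    intro i
    have hmem : B i ∈ insert ∅ b := hB ▸ Set.mem_range_self i
    rcases Set.mem_insert_iff.mp hmem with h | h
    · rw [h]; exact isOpen_empty
    · exact hbasis.isOpen h
  set A : Finset ℕ → Set E := fun s => ⋃ i ∈ s, B i with hA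
  have hAmeas : ∀ s : Finset ℕ, MeasurableSet (A s) := fun s =>
    s.measurableSet_biUnion fun i _ => (hBopen i).measurableSet
  have h_ae : ∀ᵐ ω ∂ℙ, ∀ s : Finset ℕ,
      Tendsto (fun n => (empirical E n ω (A s) : ℝ≥0)) atTop (𝓝 (μ (A s))) :=
    ae_all_iff.mpr fun s => empirical_tendsto_of_measurableSet ℙ μ hindep hlaw (hAmeas s)
  filter_upwards [h_ae] with ω hω
  apply MeasureTheory.tendsto_of_forall_isOpen_le_liminf
  intro G hG
  set s : ℕ → Finset ℕ := fun n => (Finset.range n).filter (fun i => B i ⊆ G) with hs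
  set v : ℕ → Set E := fun n => A (s n) with hv
  have hvsub : ∀ n, v n ⊆ G := by
    intro n
    refine Set.iUnion₂_subset fun i hi => ?_
    exact (Finset.mem_filter.mp hi).2
  have hmono : Monotone v := by
    intro m n hmn
    refine Set.iUnion₂_subset fun i hi => ?_
    refine Set.subset_iUnion₂ (s := fun i (_ : i ∈ s n) => B i) i ?_
    rcases Finset.mem_filter.mp hi with ⟨h1, h2⟩
    exact Finset.mem_filter.mpr ⟨Finset.mem_range.mpr (lt_of_lt_of_le (Finset.mem_range.mp h1) hmn), h2⟩
  have hUnion : ⋃ n, v n = G := by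
    apply subset_antisymm
    · exact Set.iUnion_subset hvsub
    · intro x hx
      obtain ⟨u, hub, hxu, huG⟩ := hbasis.exists_subset_of_mem_open hx hG
      have hmem : u ∈ Set.range B := by rw [← hB]; exact Set.mem_insert_of_mem _ hub
      obtain ⟨i, rfl⟩ := hmem
      refine Set.mem_iUnion.mpr ⟨i + 1, ?_⟩
      refine Set.mem_biUnion ?_ hxu
      exact Finset.mem_filter.mpr ⟨Finset.mem_range.mpr (Nat.lt_succ_self i), huG⟩
  have htend : Tendsto (fun n => (μ : Measure E) (v n)) atTop (𝓝 ((μ : Measure E) G)) := by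
    have h' := tendsto_measure_iUnion_atTop (μ := (μ : Measure E)) hmono
    rwa [hUnion] at h'
  have htendNN : Tendsto (fun n => (μ (v n) : ℝ≥0)) atTop (𝓝 (μ G)) :=
    (ENNReal.tendsto_toNNReal (measure_ne_top _ G)).comp htend
  refine le_of_tendsto' htendNN fun n => ?_
  have hconv : Tendsto (fun k => (empirical E k ω (v n) : ℝ≥0)) atTop (𝓝 (μ (v n))) := hω (s n)
  rw [← hconv.liminf_eq]
  refine Filter.liminf_le_liminf ?_ ?_ ?_
  · exact Eventually.of_forall fun k => ProbabilityMeasure.apply_mono _ (hvsub n)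
  · exact Filter.isBoundedUnder_of ⟨0, fun k => zero_le⟩
  · exact (Filter.isBoundedUnder_of (f := (atTop : Filter ℕ))
      ⟨1, fun k => ProbabilityMeasure.apply_le_one _ _⟩).isCoboundedUnder_ge
end

section
/- The unit ball 𝔅𝔏₁(E) is a universal Glivenko–Cantelli class: whenever the coordinate variables ξ₁, ξ₂, … are independent with common law μ ∈ 𝔐₁(E), one has ℙ-almost surely that sup{ |∫f dm_n − ∫f dμ| : f ∈ 𝔅𝔏₁(E) } → 0, as n → ∞. -/
open MeasureTheory Filter Topology
open scoped ENNReal NNReal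

section Auxiliary

open Set Metric BoundedContinuousFunction

/-- Shifting the argument of a `[0,1]`-valued antitone function changes its integral over
`(0, B]` by at most the size of the shift. -/
lemma shift_bound_aux {g : ℝ → ℝ} (hg_anti : Antitone g) (hg0 : ∀ t, 0 ≤ g t)
    (hg1 : ∀ t, g t ≤ 1) {c B : ℝ} (hc : 0 ≤ c) (hB : 0 ≤ B) :
    ∫ t in Set.Ioc 0 B, g (t - c) ≤ (∫ t in Set.Ioc 0 B, g t) + c := by
  have I : ∀ a b : ℝ, IntervalIntegrable g volume a b := fun a b => hg_anti.intervalIntegrable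
  rw [← intervalIntegral.integral_of_le hB, ← intervalIntegral.integral_of_le hB]
  have e1 : ∫ t in (0:ℝ)..B, g (t - c) = ∫ t in (-c)..(B - c), g t := by
    rw [intervalIntegral.integral_comp_sub_right g c]; norm_num
  have e2 : ∫ t in (-c)..(B - c), g t = (∫ t in (-c)..(0:ℝ), g t) + ∫ t in (0:ℝ)..(B - c), g t :=
    (intervalIntegral.integral_add_adjacent_intervals (I _ _) (I _ _)).symm
  have b1 : ∫ t in (-c)..(0:ℝ), g t ≤ c := by
    have : ∫ t in (-c)..(0:ℝ), g t ≤ ∫ t in (-c)..(0:ℝ), (1:ℝ) :=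
      intervalIntegral.integral_mono_on (by linarith) (I _ _) intervalIntegrable_const
        (fun x _ => hg1 x)
    simpa using this
  have b2 : ∫ t in (0:ℝ)..(B - c), g t ≤ ∫ t in (0:ℝ)..B, g t := by
    by_cases h : 0 ≤ B - c
    · exact intervalIntegral.integral_mono_interval le_rfl h (by linarith)
        (Filter.Eventually.of_forall fun x => hg0 x) (I _ _)
    · push_neg at h
      rw [intervalIntegral.integral_symm]
      have h1 : 0 ≤ ∫ t in (B - c)..(0:ℝ), g t :=
        intervalIntegral.integral_nonneg (by linarith) (fun x _ => hg0 x)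
      have h2 : 0 ≤ ∫ t in (0:ℝ)..B, g t :=
        intervalIntegral.integral_nonneg hB (fun x _ => hg0 x)
      linarith
  rw [e1, e2]; linarith

/-- One-sided bounded-Lipschitz bound in terms of the Lévy-Prokhorov distance. -/
lemma bl_one_side {E : Type*} [MeasurableSpace E] [PseudoMetricSpace E] [OpensMeasurableSpace E]
    (μ ν : Measure E) [IsProbabilityMeasure μ] [IsProbabilityMeasure ν]
    {ε : ℝ} (hε : 0 < ε) (h : levyProkhorovEDist ν μ < ENNReal.ofReal ε)
    (f : BoundedContinuousFunction E ℝ) {K : ℝ≥0} (hK : LipschitzWith K ⇑f)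
    (hfK : ‖f‖ + (K : ℝ) ≤ 1) :
    (∫ x, f x ∂ν) - ∫ x, f x ∂μ ≤ 2 * ε := by
  set g : BoundedContinuousFunction E ℝ := f + BoundedContinuousFunction.const E ‖f‖ with hg
  have g_apply : ∀ x, g x = f x + ‖f‖ := fun x => rfl
  have g_nn : ∀ x, 0 ≤ g x := by
    intro x
    have := f.norm_coe_le_norm x
    rw [Real.norm_eq_abs, abs_le] at this
    rw [g_apply]; linarith [this.1]
  have hg_lip : LipschitzWith K ⇑g := by
    intro x y
    have : edist (g x) (g y) = edist (f x) (f y) := by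
      rw [g_apply, g_apply, edist_add_right]
    rw [this]; exact hK x y
  have hg_norm : ‖g‖ ≤ 2 * ‖f‖ := by
    refine (norm_add_le _ _).trans ?_
    have := BoundedContinuousFunction.norm_const_le (α := E) ‖f‖
    rw [Real.norm_eq_abs, abs_of_nonneg (norm_nonneg f)] at this
    linarith
  have hεK : (0:ℝ) ≤ (K:ℝ) * ε := mul_nonneg K.coe_nonneg hε.le
  have key1 := BoundedContinuousFunction.integral_le_of_levyProkhorovEDist_lt ν μ hε h g
      (Filter.Eventually.of_forall g_nn)
  have incl : ∀ t : ℝ, thickening ε {a | t ≤ g a} ⊆ {a | t - (K:ℝ) * ε ≤ g a} := by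
    intro t x hx
    obtain ⟨y, hy, hxy⟩ := Metric.mem_thickening_iff.1 hx
    have hd := hg_lip.dist_le_mul x y
    rw [Real.dist_eq, abs_le] at hd
    have : (K:ℝ) * dist x y ≤ (K:ℝ) * ε := mul_le_mul_of_nonneg_left hxy.le K.coe_nonneg
    have hyt : t ≤ g y := hy
    simp only [Set.mem_setOf_eq]
    linarith [hd.1]
  set h0 : ℝ → ℝ := fun t => (μ {a | t ≤ g a}).toReal with hh0
  have h0_anti : Antitone h0 := by
    intro s t hst
    exact ENNReal.toReal_mono (measure_ne_top μ _) (measure_mono fun a ha => hst.trans ha)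
  have h0_nn : ∀ t, 0 ≤ h0 t := fun t => ENNReal.toReal_nonneg
  have h0_le1 : ∀ t, h0 t ≤ 1 := fun t => by
    simpa using ENNReal.toReal_mono (by simp) (prob_le_one (μ := μ) (s := {a | t ≤ g a}))
  have thick_anti : Antitone (fun t => (μ (thickening ε {a | t ≤ g a})).toReal) := by
    intro s t hst
    exact ENNReal.toReal_mono (measure_ne_top μ _)
      (measure_mono (thickening_subset_of_subset ε fun a ha => hst.trans ha))
  have intble₁ : IntegrableOn (fun t => (μ (thickening ε {a | t ≤ g a})).toReal)
      (Set.Ioc 0 ‖g‖) := by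
    rw [← intervalIntegrable_iff_integrableOn_Ioc_of_le (norm_nonneg g)]
    exact thick_anti.intervalIntegrable
  have intble₂ : IntegrableOn (fun t => h0 (t - (K:ℝ)*ε)) (Set.Ioc 0 ‖g‖) := by
    rw [← intervalIntegrable_iff_integrableOn_Ioc_of_le (norm_nonneg g)]
    exact (h0_anti.comp_monotone (fun a b hab => by
      simp only [tsub_le_iff_right, sub_add_cancel]; linarith :
        Monotone (fun t : ℝ => t - (K:ℝ)*ε))).intervalIntegrable
  have key3 : (∫ t in Set.Ioc 0 ‖g‖, (μ (thickening ε {a | t ≤ g a})).toReal)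
      ≤ ∫ t in Set.Ioc 0 ‖g‖, h0 (t - (K:ℝ)*ε) := by
    refine setIntegral_mono intble₁ intble₂ fun t => ?_
    exact ENNReal.toReal_mono (measure_ne_top μ _) (measure_mono (incl t))
  have key4 : (∫ t in Set.Ioc 0 ‖g‖, h0 (t - (K:ℝ)*ε))
      ≤ (∫ t in Set.Ioc 0 ‖g‖, h0 t) + (K:ℝ)*ε :=
    shift_bound_aux h0_anti h0_nn h0_le1 hεK (norm_nonneg g)
  have key5 : (∫ t in Set.Ioc 0 ‖g‖, h0 t) = ∫ x, g x ∂μ :=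
    (BoundedContinuousFunction.integral_eq_integral_meas_le g μ
      (Filter.Eventually.of_forall g_nn)).symm
  have hgν : ∫ x, g x ∂ν = (∫ x, f x ∂ν) + ‖f‖ := by
    rw [show ⇑g = fun x => f x + ‖f‖ from rfl]
    rw [integral_add (f.integrable ν) (integrable_const _)]
    simp
  have hgμ : ∫ x, g x ∂μ = (∫ x, f x ∂μ) + ‖f‖ := by
    rw [show ⇑g = fun x => f x + ‖f‖ from rfl]
    rw [integral_add (f.integrable μ) (integrable_const _)]
    simp
  have chain : ∫ x, g x ∂ν ≤ (∫ x, g x ∂μ) + (K:ℝ)*ε + ε * ‖g‖ := by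
    calc ∫ x, g x ∂ν
        ≤ (∫ t in Set.Ioc 0 ‖g‖, (μ (thickening ε {a | t ≤ g a})).toReal) + ε * ‖g‖ := key1
      _ ≤ (∫ t in Set.Ioc 0 ‖g‖, h0 (t - (K:ℝ)*ε)) + ε * ‖g‖ := by linarith
      _ ≤ ((∫ t in Set.Ioc 0 ‖g‖, h0 t) + (K:ℝ)*ε) + ε * ‖g‖ := by linarith
      _ = (∫ x, g x ∂μ) + (K:ℝ)*ε + ε * ‖g‖ := by rw [key5]
  have hfnn : 0 ≤ ‖f‖ := norm_nonneg f
  have : ε * ‖g‖ ≤ ε * (2 * ‖f‖) := mul_le_mul_of_nonneg_left hg_norm hε.le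
  rw [hgν, hgμ] at chain
  nlinarith [K.coe_nonneg]

/-- Strong law of large numbers for indicators: the empirical measures of a Borel set converge
almost surely to its measure. -/
lemma slln_set {E : Type*} [MeasurableSpace E]
    (ℙ : Measure (ℕ → E)) [IsProbabilityMeasure ℙ] (μ : ProbabilityMeasure E)
    (hindep : ProbabilityTheory.iIndepFun
      (fun i (ω : ℕ → E) => ω i) ℙ)
    (hlaw : ∀ i : ℕ, ℙ.map (fun ω => ω i) = (μ : Measure E))
    {A : Set E} (hA : MeasurableSet A) :
    ∀ᵐ ω ∂ℙ, Tendsto (fun n => ((empMeasure E n ω) A).toReal) atTop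
      (𝓝 (((μ : Measure E) A).toReal)) := by
  set X : ℕ → (ℕ → E) → ℝ := fun i ω => A.indicator (fun _ => (1:ℝ)) (ω i) with hX
  have hmeas_ind : Measurable (A.indicator (fun _ => (1:ℝ))) := measurable_const.indicator hA
  have hint : Integrable (X 0) ℙ := by
    have hXeq : X 0 = ((fun ω : ℕ → E => ω 0) ⁻¹' A).indicator (fun _ => (1:ℝ)) := by
      ext ω; by_cases h : ω 0 ∈ A <;> simp [X, h]
    rw [hXeq]
    exact (integrable_const (1:ℝ)).indicator ((measurable_pi_apply 0) hA)
  have hind : Pairwise ((fun x1 x2 => ProbabilityTheory.IndepFun x1 x2 ℙ).onFun X) := by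
    intro i j hij
    exact (hindep.comp (fun _ => A.indicator (fun _ => (1:ℝ))) (fun _ => hmeas_ind)).indepFun hij
  have hident : ∀ i, ProbabilityTheory.IdentDistrib (X i) (X 0) ℙ ℙ := by
    intro i
    have base : ProbabilityTheory.IdentDistrib (fun ω : ℕ → E => ω i)
        (fun ω : ℕ → E => ω 0) ℙ ℙ :=
      ⟨(measurable_pi_apply i).aemeasurable, (measurable_pi_apply 0).aemeasurable,
        by rw [hlaw i, hlaw 0]⟩
    exact base.comp hmeas_ind
  have hmean : ∫ x, X 0 x ∂ℙ = ((μ : Measure E) A).toReal := by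
    have : ∫ x, X 0 x ∂ℙ = ∫ y, A.indicator (fun _ => (1:ℝ)) y ∂(ℙ.map (fun ω => ω 0)) := by
      rw [integral_map (measurable_pi_apply 0).aemeasurable hmeas_ind.aestronglyMeasurable]
    rw [this, hlaw 0]
    exact integral_indicator_one hA
  have main := ProbabilityTheory.strong_law_ae_real X hint hind hident
  rw [hmean] at main
  filter_upwards [main] with ω hω
  have h2 : Tendsto (fun n => (∑ i ∈ Finset.range (n+1), X i ω) / ((n:ℝ)+1)) atTop
      (𝓝 (((μ : Measure E) A).toReal)) := by
    have := hω.comp (tendsto_add_atTop_nat 1)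
    refine this.congr fun n => ?_
    simp only [Function.comp_apply]
    push_cast
    ring
  have key : ∀ n, ((empMeasure E n ω) A).toReal
      = (∑ i ∈ Finset.range (n+1), X i ω) / ((n:ℝ)+1) := by
    intro n
    have h1 : (empMeasure E n ω) A
        = ((n : ℝ≥0∞) + 1)⁻¹ * ∑ i ∈ Finset.range (n+1),
            A.indicator (fun _ => (1:ℝ≥0∞)) (ω i) := by
      simp only [empMeasure, Measure.smul_apply, smul_eq_mul, Measure.finset_sum_apply]
      congr 1
      exact Finset.sum_congr rfl fun i _ => Measure.dirac_apply' (ω i) hA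
    rw [h1, ENNReal.toReal_mul, ENNReal.toReal_inv, div_eq_inv_mul]
    have hcast : (((n : ℝ≥0∞) + 1).toReal) = (n:ℝ) + 1 := by
      rw [ENNReal.toReal_add (ENNReal.natCast_ne_top n) ENNReal.one_ne_top]
      simp
    rw [hcast]
    congr 1
    rw [ENNReal.toReal_sum]
    · exact Finset.sum_congr rfl fun i _ => by by_cases h : ω i ∈ A <;> simp [X, h]
    · intro i _
      by_cases h : ω i ∈ A <;> simp [h]
  exact h2.congr fun n => (key n).symm

/-- A countable class of open sets approximating all open sets from inside in measure. -/
lemma exists_countable_class (E : Type*) [MetricSpace E] [TopologicalSpace.SeparableSpace E]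
    [MeasurableSpace E] [OpensMeasurableSpace E] :
    ∃ 𝒞 : Set (Set E), 𝒞.Countable ∧ (∀ U ∈ 𝒞, IsOpen U) ∧
      ∀ (μ : Measure E) [IsFiniteMeasure μ], ∀ G : Set E, IsOpen G → ∀ ε : ℝ≥0, 0 < ε →
        ∃ U ∈ 𝒞, U ⊆ G ∧ μ G ≤ μ U + (ε : ℝ≥0∞) := by
  obtain ⟨D, Dcount, Ddense⟩ := TopologicalSpace.exists_countable_dense E
  set ℬ : Set (Set E) := (fun p : E × ℚ => Metric.ball p.1 (p.2 : ℝ)) '' (D ×ˢ (univ : Set ℚ))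
    with hℬ
  have ℬcount : ℬ.Countable := (Dcount.prod countable_univ).image _
  refine ⟨sUnion '' {S | S.Finite ∧ S ⊆ ℬ},
    (countable_setOf_finite_subset ℬcount).image _, ?_, ?_⟩
  · rintro U ⟨S, ⟨-, hSℬ⟩, rfl⟩
    exact isOpen_sUnion fun s hs => by
      obtain ⟨⟨x, q⟩, -, rfl⟩ := hSℬ hs
      exact isOpen_ball
  · intro μ _ G hG ε hε
    set T : Set (Set E) := {b | b ∈ ℬ ∧ b ⊆ G} with hT
    have hGT : G = ⋃₀ T := by
      refine subset_antisymm (fun x hx => ?_) (sUnion_subset fun b hb => hb.2)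
      obtain ⟨r, hr, hball⟩ := Metric.isOpen_iff.1 hG x hx
      obtain ⟨q, hq0, hqr⟩ := exists_rat_btwn (half_pos hr)
      obtain ⟨y, hy, hxy⟩ := Ddense.exists_dist_lt x hq0
      refine ⟨Metric.ball y (q:ℝ), ⟨⟨(y, q), ⟨hy, trivial⟩, rfl⟩, fun z hz => hball ?_⟩, ?_⟩
      · rw [Metric.mem_ball] at hz ⊢
        have := dist_triangle z y x
        rw [dist_comm y x] at this
        linarith
      · rw [Metric.mem_ball]; exact hxy
    have Tcount : T.Countable := ℬcount.mono fun b hb => hb.1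
    by_cases hTne : T.Nonempty
    · obtain ⟨f, hf⟩ := Tcount.exists_eq_range hTne
      set V : ℕ → Set E := fun n => ⋃ i ∈ Finset.range (n+1), f i with hV
      have hVmono : Monotone V := fun a b hab =>
        biUnion_subset_biUnion_left (Finset.range_subset_range.2 (by omega))
      have hmemT : ∀ i, f i ∈ T := fun i => hf ▸ ⟨i, rfl⟩
      have hV𝒞 : ∀ n, V n ∈ sUnion '' {S | S.Finite ∧ S ⊆ ℬ} := by
        intro n
        refine ⟨f '' ↑(Finset.range (n+1)),
          ⟨(Finset.range (n+1)).finite_toSet.image f, ?_⟩, ?_⟩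
        · rintro b ⟨i, -, rfl⟩
          exact (hmemT i).1
        · rw [sUnion_image]
          simp [V]
      have hVsub : ∀ n, V n ⊆ G := fun n => iUnion₂_subset fun i _ => (hmemT i).2
      have hVU : ⋃ n, V n = G := by
        rw [hGT, hf, sUnion_range]
        apply subset_antisymm
        · exact iUnion_subset fun n => iUnion₂_subset fun i _ => subset_iUnion f i
        · exact iUnion_subset fun i => subset_iUnion_of_subset i <|
            subset_biUnion_of_mem (u := fun i => f i) (Finset.self_mem_range_succ i)
      have htend : Tendsto (⇑μ ∘ V) atTop (𝓝 (μ G)) := by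
        have := tendsto_measure_iUnion_atTop (μ := μ) hVmono
        rwa [hVU] at this
      by_cases hsmall : μ G ≤ (ε : ℝ≥0∞)
      · exact ⟨V 0, hV𝒞 0, hVsub 0, le_trans hsmall le_add_self⟩
      · push_neg at hsmall
        have hmem : Ioi (μ G - ε) ∈ 𝓝 (μ G) :=
          Ioi_mem_nhds (ENNReal.sub_lt_self (measure_ne_top μ G)
            (ne_of_gt (lt_of_le_of_lt zero_le hsmall))
            (by exact_mod_cast hε.ne'))
        obtain ⟨n, hn⟩ := (htend.eventually hmem).exists
        refine ⟨V n, hV𝒞 n, hVsub n, ?_⟩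
        have h1 : μ G = (μ G - ε) + ε := (tsub_add_cancel_of_le hsmall.le).symm
        rw [h1]
        exact add_le_add (le_of_lt hn) le_rfl
    · rw [not_nonempty_iff_eq_empty] at hTne
      refine ⟨∅, ⟨∅, ⟨finite_empty, empty_subset _⟩, sUnion_empty⟩, empty_subset _, ?_⟩
      rw [hGT, hTne, sUnion_empty]
      simp

end Auxiliary

/-- The unit ball `𝔅𝔏₁(E)` is a universal Glivenko–Cantelli class: whenever the coordinate
variables `ξ₁, ξ₂, …` on `Ω = E^ℕ` are independent with common law `μ ∈ 𝔐₁(E)`, one has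
`ℙ`-almost surely that `sup { |∫f dm_n − ∫f dμ| : f ∈ 𝔅𝔏₁(E) } → 0` as `n → ∞`. -/
theorem blBall_universal_glivenko_cantelli (E : Type*) [MetricSpace E] [PolishSpace E]
    [MeasurableSpace E] [BorelSpace E]
    (ℙ : Measure (ℕ → E)) [IsProbabilityMeasure ℙ]
    (μ : ProbabilityMeasure E)
    (hindep : ProbabilityTheory.iIndepFun
      (fun i (ω : ℕ → E) => ω i) ℙ)
    (hlaw : ∀ i : ℕ, ℙ.map (fun ω => ω i) = (μ : Measure E)) :
    ∀ᵐ ω ∂ℙ, Filter.Tendsto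
      (fun n => ⨆ f : BLball E,
        |(∫ x, (f : E → ℝ) x ∂(empMeasure E n ω)) - ∫ x, (f : E → ℝ) x ∂(μ : Measure E)|)
      Filter.atTop (nhds 0) := by
  obtain ⟨𝒞, hcount, hopen, happrox⟩ := exists_countable_class E
  have hAE : ∀ᵐ ω ∂ℙ, ∀ (U : Set E) (_ : U ∈ 𝒞),
      Tendsto (fun n => ((empMeasure E n ω) U).toReal) atTop
        (𝓝 (((μ : Measure E) U).toReal)) :=
    (MeasureTheory.ae_ball_iff hcount).2 fun U hU =>
      slln_set ℙ μ hindep hlaw (hopen U hU).measurableSet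
  -- the zero function is in the BL ball
  have zero_mem : (0 : BoundedContinuousFunction E ℝ) ∈ BLball E := by
    refine ⟨0, fun x y => ?_, by simp⟩
    simp
  haveI : Nonempty ↥(BLball E) := ⟨⟨0, zero_mem⟩⟩
  have habs : ∀ (ρ : Measure E), IsProbabilityMeasure ρ →
      ∀ (f : BoundedContinuousFunction E ℝ), |∫ x, f x ∂ρ| ≤ ‖f‖ := by
    intro ρ hρ f
    rw [← Real.norm_eq_abs]
    have := norm_integral_le_of_norm_le_const (μ := ρ) (C := ‖f‖)
      (Filter.Eventually.of_forall fun x => f.norm_coe_le_norm x)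
    simpa using this
  filter_upwards [hAE] with ω hω
  haveI hP : ∀ n, IsProbabilityMeasure (empMeasure E n ω) := fun n => (empirical E n ω).2
  -- convergence along the countable class, as nonnegative reals
  have TU : ∀ U ∈ 𝒞, Tendsto (fun n => (empirical E n ω) U) atTop (𝓝 (μ U)) := by
    intro U hU
    rw [← NNReal.tendsto_coe]
    exact hω U hU
  -- the liminf condition for open sets
  have h_opens : ∀ G, IsOpen G → μ G ≤ liminf (fun n => (empirical E n ω) G) atTop := by
    intro G hG
    refine le_of_forall_pos_le_add fun ε hε => ?_
    obtain ⟨U, hU𝒞, hUG, hle⟩ := happrox (μ : Measure E) G hG ε hε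
    have nn : μ G ≤ μ U + ε := by
      rw [← ENNReal.coe_le_coe]
      push_cast
      rw [MeasureTheory.ProbabilityMeasure.ennreal_coeFn_eq_coeFn_toMeasure,
        MeasureTheory.ProbabilityMeasure.ennreal_coeFn_eq_coeFn_toMeasure]
      exact hle
    have lim_eq : liminf (fun n => (empirical E n ω) U) atTop = μ U := (TU U hU𝒞).liminf_eq
    have lmono : liminf (fun n => (empirical E n ω) U) atTop
        ≤ liminf (fun n => (empirical E n ω) G) atTop := by
      refine Filter.liminf_le_liminf
        (Filter.Eventually.of_forall fun n => (empirical E n ω).apply_mono hUG) ?_ ?_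
      · exact Filter.isBoundedUnder_of (f := (atTop : Filter ℕ)) (r := (· ≥ ·))
          ⟨0, fun n => zero_le⟩
      · exact (Filter.isBoundedUnder_of (f := (atTop : Filter ℕ)) (r := (· ≤ ·))
          ⟨1, fun n => (empirical E n ω).apply_le_one G⟩).isCoboundedUnder_ge
    calc μ G ≤ μ U + ε := nn
      _ = liminf (fun n => (empirical E n ω) U) atTop + ε := by rw [lim_eq]
      _ ≤ liminf (fun n => (empirical E n ω) G) atTop + ε := add_le_add lmono le_rfl
  -- weak convergence of the empirical measures
  have T1 : Tendsto (fun n => empirical E n ω) atTop (𝓝 μ) :=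
    MeasureTheory.tendsto_of_forall_isOpen_le_liminf h_opens
  -- convergence in the Lévy-Prokhorov metric
  have T2 : Tendsto (fun n => LevyProkhorov.ofMeasure
        (empirical E n ω)) atTop
      (𝓝 (LevyProkhorov.ofMeasure μ)) :=
    ((MeasureTheory.LevyProkhorov.continuous_ofMeasure_probabilityMeasure).tendsto μ).comp T1
  have T3 : Tendsto (fun n => levyProkhorovDist (empMeasure E n ω) (μ : Measure E)) atTop
      (𝓝 0) := by
    refine (tendsto_iff_dist_tendsto_zero.mp T2).congr fun n => ?_
    rw [MeasureTheory.LevyProkhorov.dist_probabilityMeasure_def]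
    rfl
  rw [Metric.tendsto_atTop]
  intro ε hε
  have hquarter : 0 < ε/8 := by linarith
  obtain ⟨N, hN⟩ := (Metric.tendsto_atTop.mp T3) (ε/8) hquarter
  refine ⟨N, fun n hn => ?_⟩
  have hd := hN n hn
  rw [Real.dist_eq, sub_zero, abs_lt] at hd
  have hedist : levyProkhorovEDist (empMeasure E n ω) (μ : Measure E)
      < ENNReal.ofReal (ε/8) :=
    (ENNReal.lt_ofReal_iff_toReal_lt (levyProkhorovEDist_ne_top _ _)).2 hd.2
  have hedist' : levyProkhorovEDist (μ : Measure E) (empMeasure E n ω)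
      < ENNReal.ofReal (ε/8) := by
    rwa [levyProkhorovEDist_comm]
  -- per-function bound
  have per_f : ∀ f : BLball E,
      |(∫ x, (f : E → ℝ) x ∂(empMeasure E n ω)) - ∫ x, (f : E → ℝ) x ∂(μ : Measure E)|
        ≤ 2 * (ε/8) := by
    intro f
    obtain ⟨K, hK, hfK⟩ := f.2
    refine abs_sub_le_iff.2 ⟨?_, ?_⟩
    · exact bl_one_side (μ : Measure E) (empMeasure E n ω) hquarter hedist f.1 hK hfK
    · exact bl_one_side (empMeasure E n ω) (μ : Measure E) hquarter hedist' f.1 hK hfK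
  have bdd : BddAbove (Set.range fun f : BLball E =>
      |(∫ x, (f : E → ℝ) x ∂(empMeasure E n ω)) - ∫ x, (f : E → ℝ) x ∂(μ : Measure E)|) := by
    refine ⟨2, ?_⟩
    rintro r ⟨f, rfl⟩
    obtain ⟨K, hK, hfK⟩ := f.2
    have h1 := habs (empMeasure E n ω) (hP n) f.1
    have h2 := habs (μ : Measure E) μ.2 f.1
    have h3 : ‖f.1‖ ≤ 1 := by
      have := K.coe_nonneg
      linarith
    have := abs_sub
      (∫ x, (f : E → ℝ) x ∂(empMeasure E n ω)) (∫ x, (f : E → ℝ) x ∂(μ : Measure E))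
    calc |(∫ x, (f : E → ℝ) x ∂(empMeasure E n ω)) - ∫ x, (f : E → ℝ) x ∂(μ : Measure E)|
        ≤ |∫ x, (f : E → ℝ) x ∂(empMeasure E n ω)| + |∫ x, (f : E → ℝ) x ∂(μ : Measure E)| := by
          have := abs_add_le (∫ x, (f : E → ℝ) x ∂(empMeasure E n ω))
            (-(∫ x, (f : E → ℝ) x ∂(μ : Measure E)))
          simpa [sub_eq_add_neg] using this
      _ ≤ ‖f.1‖ + ‖f.1‖ := add_le_add h1 h2
      _ ≤ 2 := by linarith
  have hSnn : 0 ≤ ⨆ f : BLball E,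
      |(∫ x, (f : E → ℝ) x ∂(empMeasure E n ω)) - ∫ x, (f : E → ℝ) x ∂(μ : Measure E)| := by
    have hle := le_ciSup bdd (⟨0, zero_mem⟩ : BLball E)
    simpa using hle
  rw [Real.dist_eq, sub_zero, abs_of_nonneg hSnn]
  have hsup : (⨆ f : BLball E,
      |(∫ x, (f : E → ℝ) x ∂(empMeasure E n ω)) - ∫ x, (f : E → ℝ) x ∂(μ : Measure E)|)
        ≤ 2 * (ε/8) := ciSup_le per_f
  linarith
end

section
/- If the sequence ξ = (ξ₁, ξ₂, …) is stationary, then ℙ-almost surely the empirical measures m_n converge to the canonical random measure υ in the weak topology, as n → ∞. -/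
set_option linter.unusedSectionVars false
set_option maxHeartbeats 1000000
open MeasureTheory Filter Topology
open scoped ENNReal NNReal

/-- The shift operator `Σ(x₁,x₂,…) = (x₂,x₃,…)` on `E^ℕ`. -/
def shift {E : Type*} (ω : ℕ → E) : ℕ → E := fun n => ω (n + 1)

/-- The shift-invariant σ-algebra `ℐ = {I ∈ ℰ^ℕ : Σ⁻¹(I) = I}` on `E^ℕ` (identified, via the
coordinate process `ξ`, with `ξ⁻¹ℐ`). -/
def shiftInvariantSigma (E : Type*) [MeasurableSpace E] : MeasurableSpace (ℕ → E) where
  MeasurableSet' I := MeasurableSet I ∧ shift ⁻¹' I = I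
  measurableSet_empty := ⟨MeasurableSet.empty, by simp⟩
  measurableSet_compl := fun s hs => ⟨hs.1.compl, by rw [Set.preimage_compl, hs.2]⟩
  measurableSet_iUnion := fun s hs =>
    ⟨MeasurableSet.iUnion fun i => (hs i).1, by simp [Set.preimage_iUnion, fun i => (hs i).2]⟩

section Maximal
variable {Ω : Type*} [MeasurableSpace Ω] {T : Ω → Ω} {h : Ω → ℝ}

/-- `maxS T h n x = max (0, S₁ x, …, Sₙ x)` where `Sₖ` is the `k`-th Birkhoff sum. -/
noncomputable def maxS (T : Ω → Ω) (h : Ω → ℝ) : ℕ → Ω → ℝ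
  | 0 => fun _ => 0
  | n + 1 => fun x => max (maxS T h n x) (birkhoffSum T h (n + 1) x)

lemma maxS_nonneg (T : Ω → Ω) (h : Ω → ℝ) : ∀ n x, 0 ≤ maxS T h n x := by
  intro n
  induction n with
  | zero => intro x; simp [maxS]
  | succ n ih => intro x; exact le_trans (ih x) (le_max_left _ _)

lemma maxS_mono (T : Ω → Ω) (h : Ω → ℝ) {n m : ℕ} (hnm : n ≤ m) (x : Ω) :
    maxS T h n x ≤ maxS T h m x := by
  induction m with
  | zero => simp_all
  | succ m ih =>
    rcases Nat.lt_or_ge n (m+1) with hc | hc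
    · exact le_trans (ih (Nat.lt_succ_iff.mp hc)) (le_max_left _ _)
    · have : n = m + 1 := le_antisymm hnm hc
      simp [this]

lemma birkhoffSum_le_maxS (T : Ω → Ω) (h : Ω → ℝ) : ∀ n x, birkhoffSum T h n x ≤ maxS T h n x := by
  intro n x
  cases n with
  | zero => simp [maxS, birkhoffSum]
  | succ n => exact le_max_right _ _

lemma maxS_key (T : Ω → Ω) (h : Ω → ℝ) : ∀ n x, maxS T h n x ≤ max 0 (h x + maxS T h n (T x)) := by
  intro n
  induction n with
  | zero => intro x; simp [maxS]
  | succ n ih =>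
    intro x
    refine max_le ?_ ?_
    · refine le_trans (ih x) (max_le (le_max_left _ _) ?_)
      refine le_trans (add_le_add (le_refl (h x)) (maxS_mono T h (Nat.le_succ n) (T x))) (le_max_right _ _)
    · rw [birkhoffSum_succ']
      refine le_trans (add_le_add (le_refl (h x)) ?_) (le_max_right _ _)
      exact le_trans (birkhoffSum_le_maxS T h n (T x)) (maxS_mono T h (Nat.le_succ n) (T x))

lemma measurable_birkhoffSum (hT : Measurable T) (hh : Measurable h) (n : ℕ) :
    Measurable (birkhoffSum T h n) := by
  unfold birkhoffSum
  exact Finset.measurable_sum _ fun k _ => hh.comp (hT.iterate k)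

lemma measurable_maxS (hT : Measurable T) (hh : Measurable h) (n : ℕ) :
    Measurable (maxS T h n) := by
  induction n with
  | zero => exact measurable_const
  | succ n ih => exact Measurable.max ih (measurable_birkhoffSum hT hh (n+1))

lemma integrable_birkhoffSum {μ : Measure Ω} (hT : MeasurePreserving T μ μ)
    (hh : Integrable h μ) (n : ℕ) : Integrable (birkhoffSum T h n) μ := by
  unfold birkhoffSum
  refine integrable_finset_sum _ fun k _ => ?_
  exact ((hT.iterate k).integrable_comp hh.aestronglyMeasurable).mpr hh

lemma integrable_maxS {μ : Measure Ω} (hT : MeasurePreserving T μ μ)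
    (hh : Integrable h μ) (n : ℕ) : Integrable (maxS T h n) μ := by
  induction n with
  | zero => exact integrable_zero _ _ _
  | succ n ih =>
    have heq : (maxS T h n ⊔ birkhoffSum T h (n+1)) = maxS T h (n+1) := by
      funext x
      simp [maxS]
    exact heq ▸ ih.sup (integrable_birkhoffSum hT hh (n+1))

/-- **Hopf's maximal ergodic theorem** (Garsia's proof). -/
theorem maximal_ergodic {μ : Measure Ω} (hT : MeasurePreserving T μ μ)
    (hhm : Measurable h) (hh : Integrable h μ) (n : ℕ) :
    0 ≤ ∫ x in {x | 0 < maxS T h n x}, h x ∂μ := by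
  set B : Set Ω := {x | 0 < maxS T h n x} with hBdef
  have hB : MeasurableSet B := measurableSet_lt measurable_const (measurable_maxS hT.measurable hhm n)
  have hMi : Integrable (maxS T h n) μ := integrable_maxS hT hh n
  have hMTi : Integrable (fun x => maxS T h n (T x)) μ :=
    (hT.integrable_comp hMi.aestronglyMeasurable).mpr hMi
  -- pointwise inequality on B
  have key : ∀ x ∈ B, maxS T h n x - maxS T h n (T x) ≤ h x := by
    intro x hx
    have hx' : (0:ℝ) < maxS T h n x := hx
    have hkey := maxS_key T h n x
    rcases max_cases (0:ℝ) (h x + maxS T h n (T x)) with ⟨he, _⟩ | ⟨he, _⟩ <;>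
      rw [he] at hkey <;> linarith
  have step1 : ∫ x in B, (maxS T h n x - maxS T h n (T x)) ∂μ ≤ ∫ x in B, h x ∂μ := by
    refine setIntegral_mono_on (hMi.sub hMTi).integrableOn hh.integrableOn hB key
  -- ∫_B maxS = ∫ maxS
  have zero_off : ∀ x ∉ B, maxS T h n x = 0 := by
    intro x hx
    have := maxS_nonneg T h n x
    simp only [hBdef, Set.mem_setOf_eq, not_lt] at hx
    linarith
  have eq1 : ∫ x in B, maxS T h n x ∂μ = ∫ x, maxS T h n x ∂μ := by
    rw [← integral_add_compl hB hMi]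
    have : ∫ x in Bᶜ, maxS T h n x ∂μ = 0 := by
      refine setIntegral_eq_zero_of_forall_eq_zero fun x hx => zero_off x hx
    linarith
  have le2 : ∫ x in B, maxS T h n (T x) ∂μ ≤ ∫ x, maxS T h n (T x) ∂μ :=
    setIntegral_le_integral hMTi (Filter.Eventually.of_forall fun x => maxS_nonneg T h n (T x))
  have eq3 : ∫ x, maxS T h n (T x) ∂μ = ∫ x, maxS T h n x ∂μ := by
    have hsm : AEStronglyMeasurable (maxS T h n) (Measure.map T μ) := by
      rw [hT.map_eq]; exact hMi.aestronglyMeasurable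
    rw [← integral_map hT.measurable.aemeasurable hsm, hT.map_eq]
  have : 0 ≤ ∫ x in B, (maxS T h n x - maxS T h n (T x)) ∂μ := by
    rw [integral_sub hMi.integrableOn hMTi.integrableOn, eq1]
    linarith
  linarith

end Maximal

section Birkhoff
variable {Ω : Type*} [MeasurableSpace Ω] {T : Ω → Ω} {h : Ω → ℝ}

lemma measurable_birkhoffAverage (hT : Measurable T) (hh : Measurable h) (n : ℕ) :
    Measurable (birkhoffAverage ℝ T h n) := by
  unfold birkhoffAverage
  exact (measurable_birkhoffSum hT hh n).const_smul ((n:ℝ)⁻¹)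

lemma abs_birkhoffAverage_le (T : Ω → Ω) (h : Ω → ℝ) {C : ℝ} (hb : ∀ x, |h x| ≤ C) (hC : 0 ≤ C)
    (n : ℕ) (x : Ω) : |birkhoffAverage ℝ T h n x| ≤ C := by
  rcases Nat.eq_zero_or_pos n with rfl | hn
  · simp [birkhoffAverage, birkhoffSum, hC]
  · have hS : |birkhoffSum T h n x| ≤ n * C := by
      refine le_trans (Finset.abs_sum_le_sum_abs _ _) ?_
      calc ∑ k ∈ Finset.range n, |h (T^[k] x)| ≤ ∑ _k ∈ Finset.range n, C :=
            Finset.sum_le_sum fun k _ => hb _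
        _ = n * C := by simp [mul_comm]
    have : |birkhoffAverage ℝ T h n x| = (n:ℝ)⁻¹ * |birkhoffSum T h n x| := by
      rw [birkhoffAverage, smul_eq_mul, abs_mul, abs_inv, Nat.abs_cast]
    rw [this]
    rw [inv_mul_le_iff₀ (by exact_mod_cast hn)]
    exact hS

lemma isBoundedUnder_le_of_abs {u : ℕ → ℝ} {C : ℝ} (hb : ∀ n, |u n| ≤ C) :
    IsBoundedUnder (· ≤ ·) atTop u :=
  isBoundedUnder_of ⟨C, fun n => le_of_abs_le (hb n)⟩

lemma isBoundedUnder_ge_of_abs {u : ℕ → ℝ} {C : ℝ} (hb : ∀ n, |u n| ≤ C) :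
    IsBoundedUnder (· ≥ ·) atTop u :=
  isBoundedUnder_of ⟨-C, fun n => neg_abs_le (u n) |>.trans' (neg_le_neg (hb n))⟩

lemma limsup_le_of_tendsto_sub {u v : ℕ → ℝ} {C : ℝ} (hu : ∀ n, |u n| ≤ C) (hv : ∀ n, |v n| ≤ C)
    (hd : Tendsto (fun n => u n - v n) atTop (𝓝 0)) :
    limsup u atTop ≤ limsup v atTop := by
  refine le_of_forall_pos_le_add fun ε hε => ?_
  refine limsup_le_of_le ((isBoundedUnder_ge_of_abs hu).isCoboundedUnder_le) ?_
  have h1 : ∀ᶠ n in atTop, v n < limsup v atTop + ε / 2 := by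
    refine eventually_lt_of_limsup_lt ?_ (isBoundedUnder_le_of_abs hv)
    have hbb : limsup v atTop ≤ limsup v atTop := le_rfl
    linarith
  have h2 : ∀ᶠ n in atTop, |u n - v n| < ε / 2 := by
    have := Metric.tendsto_atTop.mp hd (ε/2) (by linarith)
    rcases this with ⟨N, hN⟩
    refine eventually_atTop.mpr ⟨N, fun n hn => ?_⟩
    simpa [Real.dist_eq] using hN n hn
  filter_upwards [h1, h2] with n hn1 hn2
  have := abs_lt.mp hn2
  linarith

/-- The set where the limsup of Birkhoff averages exceeds `ε > 0` is null, provided the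
integral of `h` vanishes on every invariant set. -/
theorem null_limsup_gt {μ : Measure Ω} [IsProbabilityMeasure μ]
    (hT : MeasurePreserving T μ μ) {C : ℝ} (hC : 0 ≤ C)
    (hhm : Measurable h) (hb : ∀ x, |h x| ≤ C)
    (hzero : ∀ A : Set Ω, MeasurableSet A → T ⁻¹' A = A → ∫ x in A, h x ∂μ = 0)
    {ε : ℝ} (hε : 0 < ε) :
    μ {x | ε < limsup (fun n => birkhoffAverage ℝ T h n x) atTop} = 0 := by
  set φ : Ω → ℝ := fun x => limsup (fun n => birkhoffAverage ℝ T h n x) atTop with hφdef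
  have habs : ∀ n x, |birkhoffAverage ℝ T h n x| ≤ C := fun n x =>
    abs_birkhoffAverage_le T h hb hC n x
  have hφm : Measurable φ :=
    Measurable.limsup fun n => measurable_birkhoffAverage hT.measurable hhm n
  -- invariance of φ
  have hdiff : ∀ x, Tendsto (fun n => birkhoffAverage ℝ T h n (T x) - birkhoffAverage ℝ T h n x)
      atTop (𝓝 0) := by
    intro x
    have hbd : ∀ n : ℕ, |birkhoffAverage ℝ T h n (T x) - birkhoffAverage ℝ T h n x| ≤ 2*C/n := by
      intro n
      rw [birkhoffAverage_apply_sub_birkhoffAverage]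
      rcases Nat.eq_zero_or_pos n with rfl | hn
      · simp
      · rw [smul_eq_mul, abs_mul, abs_inv, Nat.abs_cast, div_eq_inv_mul]
        refine mul_le_mul_of_nonneg_left ?_ (by positivity)
        calc |h (T^[n] x) - h x| ≤ |h (T^[n] x)| + |h x| := abs_sub _ _
          _ ≤ 2 * C := by have := hb (T^[n] x); have := hb x; linarith
    have ht : Tendsto (fun n : ℕ => 2*C/n) atTop (𝓝 0) :=
      tendsto_const_div_atTop_nhds_zero_nat _
    refine squeeze_zero_norm (fun n => ?_) ht
    simpa [Real.norm_eq_abs] using hbd n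
  have hinv : ∀ x, φ (T x) = φ x := by
    intro x
    refine le_antisymm ?_ ?_
    · exact limsup_le_of_tendsto_sub (fun n => habs n (T x)) (fun n => habs n x) (hdiff x)
    · refine limsup_le_of_tendsto_sub (fun n => habs n x) (fun n => habs n (T x)) ?_
      simpa using (hdiff x).neg
  set A : Set Ω := {x | ε < φ x} with hAdef
  have hA : MeasurableSet A := measurableSet_lt measurable_const hφm
  have hTA : T ⁻¹' A = A := by
    ext x
    simp [hAdef, Set.mem_preimage, hinv x]
  set ν : Measure Ω := μ.restrict A with hνdef
  have hTν : MeasurePreserving T ν ν := by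
    refine ⟨hT.measurable, ?_⟩
    have := Measure.restrict_map hT.measurable hA (μ := μ)
    rw [hT.map_eq, hTA] at this
    exact this.symm
  set h' : Ω → ℝ := fun x => h x - ε with hh'def
  have hm' : Measurable h' := hhm.sub measurable_const
  have hintμ : Integrable h μ := by
    refine Integrable.mono' (integrable_const C) hhm.aestronglyMeasurable ?_
    exact Filter.Eventually.of_forall fun x => by simpa [Real.norm_eq_abs] using hb x
  have hi' : Integrable h' ν := (hintμ.restrict).sub (integrable_const ε)
  set B : ℕ → Set Ω := fun n => {x | 0 < maxS T h' n x} with hBdef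
  have hBmeas : ∀ n, MeasurableSet (B n) := fun n =>
    measurableSet_lt measurable_const (measurable_maxS hT.measurable hm' n)
  have hBmono : Monotone B := by
    intro n m hnm x hx
    exact lt_of_lt_of_le hx (maxS_mono T h' hnm x)
  -- A ⊆ ⋃ B n
  have hAsub : A ⊆ ⋃ n, B n := by
    intro x hx
    have hφx : ε < limsup (fun n => birkhoffAverage ℝ T h n x) atTop := hx
    have hfreq : ∃ᶠ n in atTop, ε < birkhoffAverage ℝ T h n x :=
      frequently_lt_of_lt_limsup ((isBoundedUnder_ge_of_abs (fun n => habs n x)).isCoboundedUnder_le) hφx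
    obtain ⟨n, hgt, hn1⟩ := (hfreq.and_eventually (eventually_ge_atTop 1)).exists
    refine Set.mem_iUnion.mpr ⟨n, ?_⟩
    have hnpos : (0:ℝ) < n := by exact_mod_cast hn1
    have hSsub : birkhoffSum T h' n x = birkhoffSum T h n x - n * ε := by
      simp only [hh'def, birkhoffSum, Finset.sum_sub_distrib, Finset.sum_const,
        Finset.card_range, nsmul_eq_mul]
    have hSpos : 0 < birkhoffSum T h' n x := by
      have havg : birkhoffAverage ℝ T h n x * n = birkhoffSum T h n x := by
        rw [birkhoffAverage, smul_eq_mul]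
        field_simp
      rw [hSsub]
      nlinarith [hgt, hnpos, havg]
    exact lt_of_lt_of_le hSpos (birkhoffSum_le_maxS T h' n x)
  -- maximal ergodic theorem and passage to the limit
  have hmax : ∀ n, 0 ≤ ∫ x in B n, h' x ∂ν := fun n => maximal_ergodic hTν hm' hi' n
  have htend : Tendsto (fun n => ∫ x in B n, h' x ∂ν) atTop (𝓝 (∫ x in ⋃ n, B n, h' x ∂ν)) :=
    tendsto_setIntegral_of_monotone hBmeas hBmono hi'.integrableOn
  have hUpos : 0 ≤ ∫ x in ⋃ n, B n, h' x ∂ν := ge_of_tendsto' htend hmax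
  have hUc : ν ((⋃ n, B n)ᶜ) = 0 := by
    have hsub : (⋃ n, B n)ᶜ ∩ A = ∅ := by
      rw [Set.eq_empty_iff_forall_notMem]
      rintro x ⟨hxc, hxA⟩
      exact hxc (hAsub hxA)
    rw [hνdef, Measure.restrict_apply (MeasurableSet.iUnion hBmeas).compl, hsub]
    exact measure_empty
  have hUint : ∫ x in ⋃ n, B n, h' x ∂ν = ∫ x, h' x ∂ν := by
    rw [← integral_add_compl (MeasurableSet.iUnion hBmeas) hi']
    have : ∫ x in (⋃ n, B n)ᶜ, h' x ∂ν = 0 := by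
      have h0 : ν.restrict ((⋃ n, B n)ᶜ) = 0 := Measure.restrict_eq_zero.mpr hUc
      rw [show (∫ x in (⋃ n, B n)ᶜ, h' x ∂ν) = ∫ x, h' x ∂(ν.restrict ((⋃ n, B n)ᶜ)) from rfl,
        h0, integral_zero_measure]
    linarith
  have hνint : ∫ x, h' x ∂ν = - (ε * (μ A).toReal) := by
    rw [hνdef]
    have : ∫ x in A, h' x ∂μ = ∫ x in A, h x ∂μ - ∫ x in A, (fun _ => ε) x ∂μ :=
      integral_sub hintμ.restrict (integrable_const ε)
    rw [show (∫ x, h' x ∂μ.restrict A) = ∫ x in A, h' x ∂μ from rfl, this, hzero A hA hTA,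
      setIntegral_const]
    simp [smul_eq_mul]
    rw [measureReal_def]; ring
  have : 0 ≤ - (ε * (μ A).toReal) := by rw [← hνint, ← hUint]; exact hUpos
  have htr : (μ A).toReal = 0 := by
    have h0 : 0 ≤ (μ A).toReal := ENNReal.toReal_nonneg
    nlinarith
  rcases (ENNReal.toReal_eq_zero_iff _).mp htr with h0 | htop
  · exact h0
  · exact absurd htop (measure_ne_top μ A)

end Birkhoff

section B3
variable {Ω : Type*} [MeasurableSpace Ω] {T : Ω → Ω} {h : Ω → ℝ}

lemma birkhoffAverage_neg' (T : Ω → Ω) (h : Ω → ℝ) (n : ℕ) (x : Ω) :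
    birkhoffAverage ℝ T (fun y => -h y) n x = - birkhoffAverage ℝ T h n x := by
  simp [birkhoffAverage, birkhoffSum, Finset.sum_neg_distrib]

/-- **Birkhoff's pointwise ergodic theorem** for bounded measurable functions, with the limit
identified as a given invariant function `G` whose integrals on invariant sets match those
of `f`. -/
theorem birkhoff_bounded {μ : Measure Ω} [IsProbabilityMeasure μ]
    (hT : MeasurePreserving T μ μ) {f G : Ω → ℝ} {C : ℝ} (hC : 0 ≤ C)
    (hfm : Measurable f) (hfb : ∀ x, |f x| ≤ C)
    (hGm : Measurable G) (hGb : ∀ x, |G x| ≤ C) (hGT : ∀ x, G (T x) = G x)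
    (hzero : ∀ A : Set Ω, MeasurableSet A → T ⁻¹' A = A → ∫ x in A, (f x - G x) ∂μ = 0) :
    ∀ᵐ x ∂μ, Tendsto (fun n => birkhoffAverage ℝ T f n x) atTop (𝓝 (G x)) := by
  set h : Ω → ℝ := fun x => f x - G x with hhdef
  have hhm : Measurable h := hfm.sub hGm
  have hb : ∀ x, |h x| ≤ 2 * C := by
    intro x
    calc |f x - G x| ≤ |f x| + |G x| := abs_sub _ _
      _ ≤ 2 * C := by have := hfb x; have := hGb x; linarith
  have h2C : (0:ℝ) ≤ 2 * C := by linarith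
  have hzero' : ∀ A : Set Ω, MeasurableSet A → T ⁻¹' A = A → ∫ x in A, (-h) x ∂μ = 0 := by
    intro A hA hTA
    have : ∫ x in A, (-h) x ∂μ = - ∫ x in A, h x ∂μ := by
      simp [integral_neg]
    rw [this, hzero A hA hTA, neg_zero]
  have hnm : Measurable (-h) := hhm.neg
  have hbneg : ∀ x, |(-h) x| ≤ 2 * C := fun x => by simpa [abs_neg] using hb x
  -- null sets for each rational threshold
  have hnull1 : ∀ k : ℕ, μ {x | 1/(k+1:ℝ) < limsup (fun n => birkhoffAverage ℝ T h n x) atTop} = 0 :=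
    fun k => null_limsup_gt hT h2C hhm hb hzero (by positivity)
  have hnull2 : ∀ k : ℕ,
      μ {x | 1/(k+1:ℝ) < limsup (fun n => birkhoffAverage ℝ T (-h) n x) atTop} = 0 :=
    fun k => null_limsup_gt hT h2C hnm hbneg hzero' (by positivity)
  have hae1 : ∀ᵐ x ∂μ, ∀ k : ℕ,
      limsup (fun n => birkhoffAverage ℝ T h n x) atTop ≤ 1/(k+1:ℝ) := by
    rw [ae_all_iff]
    intro k
    filter_upwards [measure_eq_zero_iff_ae_notMem.mp (hnull1 k)] with x hx
    exact not_lt.mp hx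
  have hae2 : ∀ᵐ x ∂μ, ∀ k : ℕ,
      limsup (fun n => birkhoffAverage ℝ T (-h) n x) atTop ≤ 1/(k+1:ℝ) := by
    rw [ae_all_iff]
    intro k
    filter_upwards [measure_eq_zero_iff_ae_notMem.mp (hnull2 k)] with x hx
    exact not_lt.mp hx
  filter_upwards [hae1, hae2] with x hx1 hx2
  -- first: birkhoff averages of h tend to 0 at x
  have habs : ∀ n, |birkhoffAverage ℝ T h n x| ≤ 2*C := fun n =>
    abs_birkhoffAverage_le T h hb h2C n x
  have htend0 : Tendsto (fun n => birkhoffAverage ℝ T h n x) atTop (𝓝 0) := by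
    rw [NormedAddCommGroup.tendsto_nhds_zero]
    intro δ hδ
    obtain ⟨k, hk⟩ := exists_nat_one_div_lt hδ
    have hup : ∀ᶠ n in atTop, birkhoffAverage ℝ T h n x < δ := by
      refine eventually_lt_of_limsup_lt (lt_of_le_of_lt (hx1 k) ?_)
        (isBoundedUnder_le_of_abs habs)
      exact_mod_cast hk
    have hdown : ∀ᶠ n in atTop, -birkhoffAverage ℝ T h n x < δ := by
      have habs' : ∀ n, |birkhoffAverage ℝ T (-h) n x| ≤ 2*C := fun n =>
        abs_birkhoffAverage_le T (-h) hbneg h2C n x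
      have := eventually_lt_of_limsup_lt (lt_of_le_of_lt (hx2 k) (by exact_mod_cast hk))
        (isBoundedUnder_le_of_abs habs')
      filter_upwards [this] with n hn
      have : birkhoffAverage ℝ T (-h) n x = - birkhoffAverage ℝ T h n x :=
        birkhoffAverage_neg' T h n x
      linarith [hn, this.symm.le]
    filter_upwards [hup, hdown] with n h1 h2
    rw [Real.norm_eq_abs, abs_lt]
    constructor <;> linarith
  -- birkhoff averages of G are constant (= G x) for n ≥ 1
  have hGiter : ∀ k : ℕ, G (T^[k] x) = G x := by
    intro k
    induction k with
    | zero => rfl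
    | succ k ih => rw [Function.iterate_succ_apply', hGT, ih]
  have hGavg : ∀ n : ℕ, 1 ≤ n → birkhoffAverage ℝ T G n x = G x := by
    intro n hn
    have hsum : birkhoffSum T G n x = n * G x := by
      rw [birkhoffSum]
      rw [Finset.sum_congr rfl fun k _ => hGiter k]
      simp [mul_comm]
    rw [birkhoffAverage, hsum, smul_eq_mul]
    have : (n:ℝ) ≠ 0 := by positivity
    field_simp
  -- averages are additive
  have hadd : ∀ n, birkhoffAverage ℝ T f n x
      = birkhoffAverage ℝ T h n x + birkhoffAverage ℝ T G n x := by
    intro n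
    simp only [birkhoffAverage, birkhoffSum, hhdef, Finset.sum_sub_distrib, smul_eq_mul]
    ring
  have : Tendsto (fun n => birkhoffAverage ℝ T h n x + G x) atTop (𝓝 (G x)) := by
    simpa using htend0.add_const (G x)
  refine this.congr' ?_
  filter_upwards [eventually_ge_atTop 1] with n hn
  rw [hadd n, hGavg n hn]

end B3

section Bridge
variable {E : Type*} [MeasurableSpace E]

lemma measurable_shift : Measurable (shift (E := E)) :=
  measurable_pi_lambda _ fun n => measurable_pi_apply (n + 1)

lemma shift_iterate_apply (ω : ℕ → E) (k i : ℕ) : (shift^[k] ω) i = ω (i + k) := by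
  induction k generalizing ω with
  | zero => rfl
  | succ k ih =>
    rw [Function.iterate_succ_apply]
    rw [ih (shift ω)]
    show ω (i + k + 1) = ω (i + (k + 1))
    ring_nf

lemma shiftInvariantSigma_le : shiftInvariantSigma E ≤ (by infer_instance : MeasurableSpace (ℕ → E)) :=
  fun _s hs => hs.1

lemma empMeasure_eq {B : Set E} (hB : MeasurableSet B) (n : ℕ) (ω : ℕ → E) :
    empMeasure E n ω B
      = ENNReal.ofReal (birkhoffAverage ℝ shift
          (fun ω' => Set.indicator B (fun _ => (1:ℝ)) (ω' 0)) (n+1) ω) := by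
  have hL : empMeasure E n ω B
      = ((n : ℝ≥0∞) + 1)⁻¹ * ∑ i ∈ Finset.range (n + 1), B.indicator (fun _ => (1:ℝ≥0∞)) (ω i) := by
    rw [empMeasure, Measure.smul_apply, Measure.finset_sum_apply, smul_eq_mul]
    congr 1
    refine Finset.sum_congr rfl fun i _ => ?_
    rw [Measure.dirac_apply' _ hB]
    rfl
  have hR : birkhoffAverage ℝ shift (fun ω' => B.indicator (fun _ => (1:ℝ)) (ω' 0)) (n+1) ω
      = ((n:ℝ) + 1)⁻¹ * ∑ i ∈ Finset.range (n + 1), B.indicator (fun _ => (1:ℝ)) (ω i) := by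
    rw [birkhoffAverage, birkhoffSum, smul_eq_mul]
    push_cast
    congr 1
    refine Finset.sum_congr rfl fun i _ => ?_
    rw [shift_iterate_apply ω i 0]
    norm_num
  rw [hL, hR, ENNReal.ofReal_mul (by positivity)]
  congr 1
  · rw [ENNReal.ofReal_inv_of_pos (by positivity)]
    congr 1
    rw [show ((n:ℝ) + 1) = ((n+1 : ℕ) : ℝ) by push_cast; ring, ENNReal.ofReal_natCast]
    push_cast
    ring
  · rw [ENNReal.ofReal_sum_of_nonneg (fun i _ => by
      by_cases h : ω i ∈ B <;> simp [Set.indicator_apply, h])]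
    refine (Finset.sum_congr rfl fun i _ => ?_).symm
    by_cases h : ω i ∈ B <;> simp [Set.indicator_apply, h]

end Bridge


/-- If the coordinate sequence `ξ = (ξ₁, ξ₂, …)` on `Ω = E^ℕ` is stationary, then `ℙ`-almost
surely the empirical measures `m_n` converge in the weak topology, as `n → ∞`, to the canonical
random measure `υ`, a regular version of the conditional distribution `ℙ[ξ₁ ∈ · | ξ⁻¹ℐ]`. -/
theorem empirical_tendsto_weak_of_stationary (E : Type*) [TopologicalSpace E] [PolishSpace E]
    [MeasurableSpace E] [BorelSpace E]
    (ℙ : Measure (ℕ → E)) [IsProbabilityMeasure ℙ]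
    (hstat : ℙ.map shift = ℙ)
    (υ : (ℕ → E) → ProbabilityMeasure E)
    (hυmeas : ∀ B : Set E, MeasurableSet B →
      Measurable[shiftInvariantSigma E] fun ω => (υ ω : Measure E) B)
    (hυcond : ∀ B : Set E, MeasurableSet B → ∀ A : Set (ℕ → E),
      MeasurableSet[shiftInvariantSigma E] A →
      ∫⁻ ω in A, (υ ω : Measure E) B ∂ℙ = ℙ (A ∩ {ω | ω 0 ∈ B})) :
    ∀ᵐ ω ∂ℙ, Filter.Tendsto (fun n => empirical E n ω) Filter.atTop (nhds (υ ω)) := by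
  classical
  have hT : MeasurePreserving (shift (E := E)) ℙ ℙ := ⟨measurable_shift, hstat⟩
  -- invariance of ω ↦ υ ω B
  have hinvfun : ∀ B : Set E, MeasurableSet B → ∀ ω,
      (υ (shift ω) : Measure E) B = (υ ω : Measure E) B := by
    intro B hB ω
    set ψ : (ℕ → E) → ℝ≥0∞ := fun ω' => (υ ω' : Measure E) B with hψ
    have hset := hυmeas B hB (measurableSet_singleton (ψ (shift ω)))
    have hinv : shift ⁻¹' (ψ ⁻¹' {ψ (shift ω)}) = ψ ⁻¹' {ψ (shift ω)} := hset.2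
    have hmem : ω ∈ ψ ⁻¹' {ψ (shift ω)} := by
      rw [← hinv]
      exact rfl
    exact (Set.mem_singleton_iff.mp hmem).symm
  -- countable basis
  obtain ⟨u, hu⟩ : ∃ u : ℕ → Set E,
      (TopologicalSpace.countableBasis E ∪ {∅} : Set (Set E)) = Set.range u :=
    ((TopologicalSpace.countable_countableBasis E).union (Set.countable_singleton ∅)).exists_eq_range
      ⟨∅, Or.inr rfl⟩
  have hopen : ∀ i, IsOpen (u i) := by
    intro i
    have : u i ∈ (TopologicalSpace.countableBasis E ∪ {∅} : Set (Set E)) := by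
      rw [hu]; exact ⟨i, rfl⟩
    rcases this with h | h
    · exact TopologicalSpace.isOpen_of_mem_countableBasis h
    · rw [Set.mem_singleton_iff.mp h]; exact isOpen_empty
  set U : Finset ℕ → Set E := fun s => ⋃ i ∈ s, u i with hU
  have hUopen : ∀ s, IsOpen (U s) := fun s => isOpen_biUnion fun i _ => hopen i
  have hUmeas : ∀ s, MeasurableSet (U s) := fun s => (hUopen s).measurableSet
  -- Birkhoff for each `U s`
  have hbirk : ∀ s : Finset ℕ, ∀ᵐ ω ∂ℙ,
      Tendsto (fun n => empMeasure E n ω (U s)) atTop (𝓝 ((υ ω : Measure E) (U s))) := by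
    intro s
    set B := U s with hBdef
    have hB : MeasurableSet B := hUmeas s
    set f : (ℕ → E) → ℝ := fun ω => Set.indicator B (fun _ => (1:ℝ)) (ω 0) with hf
    set G : (ℕ → E) → ℝ := fun ω => ((υ ω : Measure E) B).toReal with hG
    have hψm : Measurable fun ω => (υ ω : Measure E) B :=
      (hυmeas B hB).mono shiftInvariantSigma_le le_rfl
    have hfm : Measurable f :=
      (measurable_const.indicator hB).comp (measurable_pi_apply 0)
    have hfb : ∀ ω, |f ω| ≤ 1 := by
      intro ω
      by_cases h : ω 0 ∈ B <;> simp [hf, Set.indicator_apply, h]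
    have hGm : Measurable G := hψm.ennreal_toReal
    have hGb : ∀ ω, |G ω| ≤ 1 := by
      intro ω
      rw [abs_of_nonneg ENNReal.toReal_nonneg]
      have h1 : (υ ω : Measure E) B ≤ 1 := prob_le_one
      calc ((υ ω : Measure E) B).toReal ≤ (1 : ℝ≥0∞).toReal :=
            ENNReal.toReal_mono ENNReal.one_ne_top h1
        _ = 1 := ENNReal.toReal_one
    have hGT : ∀ ω, G (shift ω) = G ω := fun ω => congrArg ENNReal.toReal (hinvfun B hB ω)
    have hzero : ∀ A : Set (ℕ → E), MeasurableSet A → shift ⁻¹' A = A →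
        ∫ ω in A, (f ω - G ω) ∂ℙ = 0 := by
      intro A hA hTA
      have hAI : MeasurableSet[shiftInvariantSigma E] A := ⟨hA, hTA⟩
      have hC : MeasurableSet ((fun ω : ℕ → E => ω 0) ⁻¹' B) := (measurable_pi_apply 0) hB
      have hfι : Integrable f (ℙ.restrict A) := by
        refine Integrable.mono' (integrable_const 1) hfm.aestronglyMeasurable ?_
        exact Filter.Eventually.of_forall fun ω => by simpa [Real.norm_eq_abs] using hfb ω
      have hGι : Integrable G (ℙ.restrict A) := by
        refine Integrable.mono' (integrable_const 1) hGm.aestronglyMeasurable ?_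
        exact Filter.Eventually.of_forall fun ω => by simpa [Real.norm_eq_abs] using hGb ω
      rw [integral_sub hfι hGι]
      have hfi : ∫ ω in A, f ω ∂ℙ = (ℙ (A ∩ {ω | ω 0 ∈ B})).toReal := by
        have hfeq : f = Set.indicator ((fun ω : ℕ → E => ω 0) ⁻¹' B) (fun _ => (1:ℝ)) := by
          funext ω
          by_cases h : ω 0 ∈ B <;> simp [hf, Set.indicator_apply, Set.mem_preimage, h]
        rw [hfeq, show (∫ ω in A, Set.indicator ((fun ω : ℕ → E => ω 0) ⁻¹' B) (fun _ => (1:ℝ)) ω ∂ℙ)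
            = ∫ ω, Set.indicator ((fun ω : ℕ → E => ω 0) ⁻¹' B) (fun _ => (1:ℝ)) ω ∂(ℙ.restrict A) from rfl,
          integral_indicator_const (1:ℝ) hC, measureReal_def, Measure.restrict_apply hC]
        rw [smul_eq_mul, mul_one]
        congr 1
        rw [Set.inter_comm]
        rfl
      have hGi : ∫ ω in A, G ω ∂ℙ = (ℙ (A ∩ {ω | ω 0 ∈ B})).toReal := by
        have : ∫ ω in A, G ω ∂ℙ = (∫⁻ ω in A, (υ ω : Measure E) B ∂ℙ).toReal := by
          refine integral_toReal (hψm.aemeasurable.restrict) ?_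
          refine Filter.Eventually.of_forall fun ω => ?_
          exact lt_of_le_of_lt prob_le_one ENNReal.one_lt_top
        rw [this, hυcond B hB A hAI]
      rw [hfi, hGi, sub_self]
    have := birkhoff_bounded hT (le_of_lt one_pos) hfm hfb hGm hGb hGT hzero
    filter_upwards [this] with ω hω
    have h1 : Tendsto (fun n => birkhoffAverage ℝ shift f (n+1) ω) atTop (𝓝 (G ω)) :=
      hω.comp (tendsto_add_atTop_nat 1)
    have h2 : Tendsto (fun n => ENNReal.ofReal (birkhoffAverage ℝ shift f (n+1) ω)) atTop
        (𝓝 (ENNReal.ofReal (G ω))) :=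
      (ENNReal.continuous_ofReal.tendsto _).comp h1
    have h3 : ENNReal.ofReal (G ω) = (υ ω : Measure E) B :=
      ENNReal.ofReal_toReal (measure_ne_top _ _)
    rw [h3] at h2
    refine h2.congr fun n => ?_
    exact (empMeasure_eq hB n ω).symm
  -- combine over all finite unions
  rw [show (∀ᵐ ω ∂ℙ, Tendsto (fun n => empirical E n ω) atTop (𝓝 (υ ω))) =
    (∀ᵐ ω ∂ℙ, Tendsto (fun n => empirical E n ω) atTop (𝓝 (υ ω))) from rfl]
  have hae : ∀ᵐ ω ∂ℙ, ∀ s : Finset ℕ,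
      Tendsto (fun n => empMeasure E n ω (U s)) atTop (𝓝 ((υ ω : Measure E) (U s))) :=
    ae_all_iff.mpr hbirk
  filter_upwards [hae] with ω hω
  refine MeasureTheory.tendsto_of_forall_isOpen_le_liminf fun G hG => ?_
  -- ℝ≥0∞ bound first
  have key : (υ ω : Measure E) G ≤ liminf (fun n => empMeasure E n ω G) atTop := by
    set s : ℕ → Finset ℕ := fun k => (Finset.range (k+1)).filter (fun i => u i ⊆ G) with hs
    have hmono : Monotone fun k => U (s k) := by
      intro k l hkl x hx
      rcases Set.mem_iUnion₂.mp hx with ⟨i, hi, hxi⟩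
      rcases Finset.mem_filter.mp hi with ⟨hir, hiG⟩
      exact Set.mem_iUnion₂.mpr ⟨i, Finset.mem_filter.mpr
        ⟨Finset.mem_range.mpr (lt_of_lt_of_le (Finset.mem_range.mp hir) (by omega)), hiG⟩, hxi⟩
    have hUnion : (⋃ k, U (s k)) = G := by
      apply Set.Subset.antisymm
      · refine Set.iUnion_subset fun k => ?_
        refine Set.iUnion₂_subset fun i hi => ?_
        exact (Finset.mem_filter.mp hi).2
      · intro x hx
        obtain ⟨v, hv, hxv, hvG⟩ :=
          (TopologicalSpace.isBasis_countableBasis E).exists_subset_of_mem_open hx hG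
        have : v ∈ Set.range u := by rw [← hu]; exact Or.inl hv
        obtain ⟨i, rfl⟩ := this
        refine Set.mem_iUnion.mpr ⟨i, Set.mem_iUnion₂.mpr ⟨i, ?_, hxv⟩⟩
        exact Finset.mem_filter.mpr ⟨Finset.mem_range.mpr (by omega), hvG⟩
    have htm : Tendsto (fun k => (υ ω : Measure E) (U (s k))) atTop (𝓝 ((υ ω : Measure E) G)) := by
      have := tendsto_measure_iUnion_atTop (μ := (υ ω : Measure E)) hmono
      rw [hUnion] at this
      exact this
    refine le_of_tendsto htm (Filter.Eventually.of_forall fun k => ?_)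
    have hlim : liminf (fun n => empMeasure E n ω (U (s k))) atTop = (υ ω : Measure E) (U (s k)) :=
      (hω (s k)).liminf_eq
    rw [← hlim]
    refine Filter.liminf_le_liminf (Filter.Eventually.of_forall fun n => ?_)
    refine measure_mono ?_
    rw [← hUnion]
    exact Set.subset_iUnion (fun k => U (s k)) k
  -- convert to ℝ≥0
  have aux : (↑(liminf (fun i => empirical E i ω G) atTop) : ℝ≥0∞)
      = liminf (fun i => ((empirical E i ω G : ℝ≥0) : ℝ≥0∞)) atTop := by
    refine Monotone.map_liminf_of_continuousAt (F := atTop) ENNReal.coe_mono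
      (fun i => empirical E i ω G) ENNReal.continuous_coe.continuousAt ?_ ?_
    · exact IsBoundedUnder.isCoboundedUnder_ge ⟨1, by
        simp only [eventually_map]
        exact Filter.Eventually.of_forall fun i => ProbabilityMeasure.apply_le_one _ _⟩
    · exact ⟨0, Filter.Eventually.of_forall fun i => by positivity⟩
  rw [← ENNReal.coe_le_coe, ProbabilityMeasure.ennreal_coeFn_eq_coeFn_toMeasure, aux]
  have : (fun i => ((empirical E i ω G : ℝ≥0) : ℝ≥0∞)) = fun i => empMeasure E i ω G := by
    funext i
    rw [ProbabilityMeasure.ennreal_coeFn_eq_coeFn_toMeasure]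
    rfl
  rw [this]
  exact key
end
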